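/- arXiv:1907.07302 — 4 statements merged into one kernel-verified Lean document; each statement's English description precedes it below -/
import Mathlib

section
/- Let t > 0 and let K : ℝ → ℝ satisfy the kernel hypotheses. (a) Suppose Φ : ℝ → ℝ vanishes on (−∞, −t), is continuous and square-integrable on (−t, t), and satisfies Φ(x) + ∫_{−∞}^t K(x+y) Φ(y) dy = 1 for all x ∈ (−t, t). If the only f ∈ L²((−∞, t)) with f(x) − ∫_{−∞}^t K(x+y) f(y) dy = 0 for a.e. x < t is f = 0 a.e., then the one-sided limit Φ(t⁻) := lim_{x→t⁻} Φ(x) exists and Φ(t⁻) ≠ 0. (b) Analogously, suppose Ψ : ℝ → ℝ vanishes on (−∞, −t), is continuous and square-integrable on (−t, t), and satisfies Ψ(x) − ∫_{−∞}^t K(x+y) Ψ(y) dy = 1 for all x ∈ (−t, t). If the only f ∈ L²((−∞, t)) with f(x) + ∫_{−∞}^t K(x+y) f(y) dy = 0 for a.e. x < t is f = 0 a.e., then lim_{x→t⁻} Ψ(x) exists and is nonzero. -/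
open MeasureTheory Set Filter

private lemma ae_ne_pt (c : ℝ) : ∀ᵐ x ∂(volume : Measure ℝ), x ≠ c := by
  filter_upwards [(compl_mem_ae_iff.mpr (measure_singleton c) :
    ({c}ᶜ : Set ℝ) ∈ ae volume)] with x hx
  simpa using hx

private lemma key_lemma (t : ℝ) (ht : 0 < t) (K k₀ : ℝ → ℝ) (hk₀m : Measurable k₀)
    (hk₀i : ∀ a b : ℝ, IntegrableOn k₀ (Icc a b) volume)
    (hKdef : ∀ x : ℝ, K x = ∫ s in (0:ℝ)..x, k₀ s)
    (hK0 : ∀ x < (0:ℝ), K x = 0)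
    (ε : ℝ) (hε : ε = 1 ∨ ε = -1)
    (Φ : ℝ → ℝ)
    (hΦ0 : ∀ x < -t, Φ x = 0)
    (hΦc : ContinuousOn Φ (Ioo (-t) t))
    (hΦ2 : MemLp Φ 2 (volume.restrict (Ioo (-t) t)))
    (hΦeq : ∀ x ∈ Ioo (-t) t, Φ x + ε * ∫ y in Iio t, K (x + y) * Φ y = 1)
    (hinj : ∀ f : ℝ → ℝ, MemLp f 2 (volume.restrict (Iio t)) →
      (∀ᵐ x ∂volume.restrict (Iio t), f x - ε * ∫ y in Iio t, K (x + y) * f y = 0) →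
      f =ᵐ[volume.restrict (Iio t)] 0) :
    ∃ L : ℝ, L ≠ 0 ∧ Tendsto Φ (nhdsWithin t (Iio t)) (nhds L) := by
  have htt : -t < t := by linarith
  have hε2 : ε * ε = 1 := by rcases hε with h | h <;> rw [h] <;> norm_num
  set S : Set ℝ := Ioo (-t) t with hSdef
  have hSm : MeasurableSet S := measurableSet_Ioo
  have hSopen : IsOpen S := isOpen_Ioo
  have hSsub : S ⊆ Iio t := fun x hx => hx.2
  haveI hSfin : IsFiniteMeasure (volume.restrict S) := by
    constructor
    rw [Measure.restrict_apply_univ, hSdef, Real.volume_Ioo]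
    exact ENNReal.ofReal_lt_top
  set φ : ℝ → ℝ := S.indicator Φ with hφdef
  have hφeqΦ : ∀ x ∈ S, φ x = Φ x := fun x hx => indicator_of_mem hx Φ
  have hφm : Measurable φ := by
    apply measurable_of_isOpen
    intro U hU
    have hopen : IsOpen (S ∩ Φ ⁻¹' U) := hΦc.isOpen_inter_preimage hSopen hU
    by_cases h0 : (0:ℝ) ∈ U
    · have hpre : φ ⁻¹' U = (S ∩ Φ ⁻¹' U) ∪ Sᶜ := by
        ext x
        by_cases hx : x ∈ S
        · simp [hφdef, indicator_of_mem hx, hx]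
        · simp [hφdef, indicator_of_notMem hx, hx, h0]
      rw [hpre]; exact hopen.measurableSet.union hSm.compl
    · have hpre : φ ⁻¹' U = S ∩ Φ ⁻¹' U := by
        ext x
        by_cases hx : x ∈ S
        · simp [hφdef, indicator_of_mem hx, hx]
        · simp [hφdef, indicator_of_notMem hx, hx, h0]
      rw [hpre]; exact hopen.measurableSet
  have hφ2 : MemLp φ 2 (volume.restrict S) :=
    MemLp.ae_eq ((ae_restrict_mem hSm).mono fun x hx => (hφeqΦ x hx).symm) hΦ2
  have hφi : IntegrableOn φ S volume := hφ2.integrable one_le_two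
  have hφsqi : IntegrableOn (fun y => φ y ^ 2) S volume :=
    (memLp_two_iff_integrable_sq hφ2.aestronglyMeasurable).1 hφ2
  have hφsqm : Measurable fun y => φ y ^ 2 := hφm.pow_const 2
  -- interval integrability of k₀
  have hint : ∀ a b : ℝ, IntervalIntegrable k₀ volume a b := by
    intro a b
    apply IntegrableOn.intervalIntegrable
    exact (hk₀i (min a b) (max a b)).mono_set (by rw [uIcc])
  have hKc : Continuous K := by
    have : K = fun x => ∫ s in (0:ℝ)..x, k₀ s := funext hKdef
    rw [this]
    exact intervalIntegral.continuous_primitive hint 0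
  have hKsub : ∀ a b : ℝ, K b - K a = ∫ s in a..b, k₀ s := by
    intro a b
    rw [hKdef b, hKdef a]
    exact intervalIntegral.integral_interval_sub_left (hint 0 b) (hint 0 a)
  have hKb : ∀ R : ℝ, ∃ C : ℝ, ∀ u : ℝ, |u| ≤ R → |K u| ≤ C := by
    intro R
    obtain ⟨C, hC⟩ := (isCompact_Icc (a := -R) (b := R)).exists_bound_of_continuousOn
      hKc.continuousOn
    refine ⟨C, fun u hu => ?_⟩
    have := hC u ⟨(abs_le.mp hu).1, (abs_le.mp hu).2⟩
    simpa [Real.norm_eq_abs] using this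
  -- shifted integrability of k₀-like kernels
  have hshift : ∀ (κ : ℝ → ℝ), (∀ a b : ℝ, IntegrableOn κ (Icc a b) volume) →
      ∀ (x a b : ℝ), IntegrableOn (fun y => κ (x + y)) (Ioc a b) volume := by
    intro κ hκ x a b
    have h1 : IntervalIntegrable κ volume (a + x) (b + x) := by
      apply IntegrableOn.intervalIntegrable
      exact (hκ (min (a+x) (b+x)) (max (a+x) (b+x))).mono_set (by rw [uIcc])
    have h2 := h1.comp_add_right x
    simp only [add_sub_cancel_right] at h2
    have h3 : IntegrableOn (fun y => κ (y + x)) (Ioc a b) volume := h2.1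
    simpa [add_comm] using h3
  -- integrability of the K-integrand
  have hKint : ∀ x : ℝ, IntegrableOn (fun y => K (x + y) * φ y) S volume := by
    intro x
    obtain ⟨C, hC⟩ := hKb (|x| + t)
    refine Integrable.bdd_mul (c := C) hφi
      ((hKc.comp (continuous_const.add continuous_id)).aestronglyMeasurable) ?_
    filter_upwards [ae_restrict_mem hSm] with y hy
    rw [Real.norm_eq_abs]
    apply hC
    have h1 : |y| ≤ t := le_of_lt (abs_lt.mpr ⟨hy.1, hy.2⟩)
    calc |x + y| ≤ |x| + |y| := abs_add_le _ _
      _ ≤ |x| + t := by linarith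
  -- reduce integrals over Iio t to integrals over S
  have hIJ : ∀ x : ℝ, (∫ y in Iio t, K (x + y) * Φ y) = ∫ y in S, K (x + y) * φ y := by
    intro x
    have h1 : (fun y => K (x + y) * Φ y)
        =ᵐ[volume.restrict (Iio t)] fun y => S.indicator (fun y => K (x + y) * Φ y) y := by
      filter_upwards [ae_restrict_mem measurableSet_Iio, ae_restrict_of_ae (ae_ne_pt (-t))]
        with y hy hne
      by_cases hyS : y ∈ S
      · rw [indicator_of_mem hyS]
      · rw [indicator_of_notMem hyS]
        have hyle : y < -t := by
          rcases lt_or_ge y (-t) with h | h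
          · exact h
          · exact absurd ⟨lt_of_le_of_ne h (Ne.symm hne), hy⟩ hyS
        rw [hΦ0 y hyle, mul_zero]
    rw [integral_congr_ae h1, setIntegral_indicator hSm,
      inter_eq_self_of_subset_right hSsub]
    exact setIntegral_congr_fun hSm fun y hy => by rw [hφeqΦ y hy]
  set J : ℝ → ℝ := fun x => ∫ y in S, K (x + y) * φ y with hJdef
  set g : ℝ → ℝ := fun x => ∫ y in S, k₀ (x + y) * φ y with hgdef
  have hΦval : ∀ x ∈ S, Φ x = 1 - ε * J x := by
    intro x hx
    have := hΦeq x hx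
    rw [hIJ x] at this
    rw [hJdef]; linarith
  -- continuity of J at t, hence the limit exists
  have hJt : Tendsto J (nhds t) (nhds (J t)) := by
    obtain ⟨C, hC⟩ := hKb (|t| + 1 + t)
    apply MeasureTheory.tendsto_integral_filter_of_dominated_convergence
      (bound := fun y => C * ‖φ y‖)
    · exact Eventually.of_forall fun x =>
        ((hKc.comp (continuous_const.add continuous_id)).aestronglyMeasurable).mul
          hφ2.aestronglyMeasurable
    · filter_upwards [Ioo_mem_nhds (show t - 1 < t by linarith) (show t < t + 1 by linarith)]
        with x hx
      filter_upwards [ae_restrict_mem hSm] with y hy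
      rw [norm_mul]
      apply mul_le_mul_of_nonneg_right _ (norm_nonneg _)
      rw [Real.norm_eq_abs]
      apply hC
      have h1 : |y| ≤ t := le_of_lt (abs_lt.mpr ⟨hy.1, hy.2⟩)
      have h2 : |x| ≤ |t| + 1 := by
        rw [abs_le]
        constructor
        · have := neg_abs_le t; linarith [hx.1]
        · have := le_abs_self t; linarith [hx.2]
      calc |x + y| ≤ |x| + |y| := abs_add_le _ _
        _ ≤ |t| + 1 + t := by linarith
    · exact hφi.norm.const_mul C
    · filter_upwards [ae_restrict_mem hSm] with y _
      exact (((hKc.comp (continuous_id.add continuous_const)).mul continuous_const).tendsto t)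
  have hLtendsto : Tendsto Φ (nhdsWithin t (Iio t)) (nhds (1 - ε * J t)) := by
    have hev : ∀ᶠ x in nhdsWithin t (Iio t), Φ x = 1 - ε * J x := by
      filter_upwards [Ioo_mem_nhdsLT_of_mem (show t ∈ Ioc (-t) t from ⟨htt, le_refl t⟩)]
        with x hx using hΦval x hx
    have h2 : Tendsto (fun x => 1 - ε * J x) (nhdsWithin t (Iio t)) (nhds (1 - ε * J t)) :=
      tendsto_const_nhds.sub (tendsto_const_nhds.mul (hJt.mono_left nhdsWithin_le_nhds))
    exact h2.congr' (hev.mono fun x h => h.symm)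
  refine ⟨1 - ε * J t, fun hL0 => ?_, hLtendsto⟩
  -- from here on: derive a contradiction from `1 - ε * J t = 0`
  have hJt1 : ε * J t = 1 := by linarith [sub_eq_zero.mp hL0]
  have hJtval : J t = ε := by
    have := congrArg (fun z => ε * z) hJt1
    simpa [← mul_assoc, hε2] using this
  -- joint integrability machinery
  have hJoint : ∀ (κ ψ : ℝ → ℝ), Measurable κ → (∀ a b : ℝ, IntegrableOn κ (Icc a b) volume) →
      Measurable ψ → IntegrableOn ψ S volume → ∀ a b : ℝ,
      Integrable (fun p : ℝ × ℝ => κ (p.1 + p.2) * ψ p.2)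
        ((volume.restrict (Ioc a b)).prod (volume.restrict S)) := by
    intro κ ψ hκm hκi hψm hψi a b
    have hmeas : AEStronglyMeasurable (fun p : ℝ × ℝ => κ (p.1 + p.2) * ψ p.2)
        ((volume.restrict (Ioc a b)).prod (volume.restrict S)) :=
      ((hκm.comp (measurable_fst.add measurable_snd)).mul
        (hψm.comp measurable_snd)).aestronglyMeasurable
    rw [integrable_prod_iff' hmeas]
    constructor
    · refine Eventually.of_forall fun y => ?_
      exact ((hshift κ hκi y a b).congr_fun (fun s _ => by rw [add_comm]) measurableSet_Ioc).mul_const (ψ y)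
    · set C : ℝ := ∫ s in Icc (a - t) (b + t), |κ s| with hCdef
      have hCb : ∀ y ∈ S, (∫ s in Ioc a b, |κ (s + y)|) ≤ C := by
        intro y hy
        rcases le_or_gt a b with hab | hab
        · have h1 : (∫ s in Ioc a b, |κ (s + y)|) = ∫ s in Ioc (a + y) (b + y), |κ s| := by
            rw [← intervalIntegral.integral_of_le hab, ← intervalIntegral.integral_of_le
              (by linarith : a + y ≤ b + y)]
            exact intervalIntegral.integral_comp_add_right (fun s => |κ s|) y
          rw [h1, hCdef]
          apply setIntegral_mono_set ((hκi (a - t) (b + t)).abs)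
          · exact Eventually.of_forall fun s => abs_nonneg _
          · apply HasSubset.Subset.eventuallyLE
            intro s hs
            exact ⟨by linarith [hs.1, hy.1], by linarith [hs.2, hy.2]⟩
        · rw [Ioc_eq_empty (by linarith)]
          simp only [Measure.restrict_empty, integral_zero_measure]
          rw [hCdef]
          exact setIntegral_nonneg measurableSet_Icc fun s _ => abs_nonneg _
      have hfun : (fun y => ∫ s in Ioc a b, ‖κ (s + y) * ψ y‖) =
          fun y => (∫ s in Ioc a b, |κ (s + y)|) * ‖ψ y‖ := by
        funext y
        rw [← integral_mul_const]
        congr 1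
        funext s
        rw [norm_mul, Real.norm_eq_abs]
      rw [hfun]
      apply Integrable.mono' (hψi.norm.const_mul C)
      · have hm2 : Measurable (Function.uncurry fun s y => |κ (s + y)|) :=
          (hκm.comp (measurable_fst.add measurable_snd)).abs
        exact ((hm2.stronglyMeasurable.integral_prod_left).measurable.mul
          hψm.norm).aestronglyMeasurable
      · filter_upwards [ae_restrict_mem hSm] with y hy
        rw [Real.norm_eq_abs, abs_mul, abs_of_nonneg
          (setIntegral_nonneg measurableSet_Ioc fun s _ => abs_nonneg _)]
        rw [abs_norm]
        exact mul_le_mul_of_nonneg_right (hCb y hy) (norm_nonneg _)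
  -- measurability and integrability of g
  have hgm : Measurable g := by
    have hm : Measurable (Function.uncurry fun x y => k₀ (x + y) * φ y) :=
      (hk₀m.comp (measurable_fst.add measurable_snd)).mul (hφm.comp measurable_snd)
    exact hm.stronglyMeasurable.integral_prod_right.measurable
  have hSIoc : volume.restrict S = volume.restrict (Ioc (-t) t) :=
    Measure.restrict_congr_set Ioo_ae_eq_Ioc
  have hgi : IntegrableOn g S volume := by
    have h := (hJoint k₀ φ hk₀m hk₀i hφm hφi (-t) t).integral_prod_left
    rw [← hSIoc] at h
    exact h
  -- the fundamental identity: J b - J a = ∫ g over (a,b]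
  have hJdiff : ∀ a b : ℝ, a ≤ b → J b - J a = ∫ s in Ioc a b, g s := by
    intro a b hab
    have h1 : J b - J a = ∫ y in S, (K (b + y) - K (a + y)) * φ y := by
      rw [hJdef]
      simp only
      rw [← integral_sub (hKint b) (hKint a)]
      congr 1
      funext y
      ring
    have h2 : ∀ y, (K (b + y) - K (a + y)) * φ y = (∫ s in Ioc a b, k₀ (s + y)) * φ y := by
      intro y
      congr 1
      rw [hKsub (a + y) (b + y), ← intervalIntegral.integral_comp_add_right k₀ y,
        intervalIntegral.integral_of_le hab]
    have h3 : (∫ y in S, (∫ s in Ioc a b, k₀ (s + y)) * φ y) =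
        ∫ y in S, ∫ s in Ioc a b, k₀ (s + y) * φ y := by
      congr 1
      funext y
      rw [← integral_mul_const]
    have h4 : (∫ y in S, ∫ s in Ioc a b, k₀ (s + y) * φ y) =
        ∫ s in Ioc a b, ∫ y in S, k₀ (s + y) * φ y :=
      (integral_integral_swap (f := fun s y => k₀ (s + y) * φ y)
        (hJoint k₀ φ hk₀m hk₀i hφm hφi a b)).symm
    rw [h1]
    simp only [h2]
    rw [h3, h4]
  -- g is in L²(S) via Cauchy-Schwarz
  have habs : ∀ a b : ℝ, IntegrableOn (fun u => |k₀ u|) (Icc a b) volume :=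
    fun a b => (hk₀i a b).abs
  have habsm : Measurable fun u => |k₀ u| := hk₀m.abs
  have hkx : ∀ x : ℝ, IntegrableOn (fun y => |k₀ (x + y)|) S volume := by
    intro x
    have h := hshift _ habs x (-t) t
    rw [IntegrableOn, hSIoc]
    exact h
  set C₁ : ℝ := ∫ s in Icc (-t - t) (t + t), |k₀ s| with hC₁def
  have hC₁0 : 0 ≤ C₁ := setIntegral_nonneg measurableSet_Icc fun s _ => abs_nonneg _
  have hkxb : ∀ x ∈ S, (∫ y in S, |k₀ (x + y)|) ≤ C₁ := by
    intro x hx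
    have h1 : (∫ y in S, |k₀ (x + y)|) = ∫ y in Ioc (x + -t) (x + t), |k₀ y| := by
      rw [hSdef, show volume.restrict (Ioo (-t) t) = volume.restrict (Ioc (-t) t) from
        Measure.restrict_congr_set Ioo_ae_eq_Ioc,
        ← intervalIntegral.integral_of_le htt.le,
        intervalIntegral.integral_comp_add_left (fun y => |k₀ y|) x,
        intervalIntegral.integral_of_le (by linarith : x + -t ≤ x + t)]
    rw [h1, hC₁def]
    apply setIntegral_mono_set (habs (-t - t) (t + t))
    · exact Eventually.of_forall fun s => abs_nonneg _
    · apply HasSubset.Subset.eventuallyLE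
      intro s hs
      exact ⟨by linarith [hs.1, hx.1], by linarith [hs.2, hx.2]⟩
  have hG2i : Integrable (fun x => ∫ y in S, |k₀ (x + y)| * φ y ^ 2) (volume.restrict S) := by
    have h := (hJoint _ _ habsm habs hφsqm hφsqi (-t) t).integral_prod_left
    rw [← hSIoc] at h
    exact h
  have hslice : ∀ᵐ x ∂volume.restrict S,
      IntegrableOn (fun y => |k₀ (x + y)| * φ y ^ 2) S volume := by
    have h := (hJoint _ _ habsm habs hφsqm hφsqi (-t) t).prod_right_ae
    rw [← hSIoc] at h
    exact h
  -- Cauchy-Schwarz bound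
  have hconj : Real.HolderConjugate 2 2 := Real.HolderConjugate.two_two
  have h2exp : ∀ u : ℝ, u ^ (2:ℝ) = u ^ 2 := fun u => by
    rw [show (2:ℝ) = ((2:ℕ):ℝ) by norm_num, Real.rpow_natCast]
  have hrt2 : (ENNReal.ofReal (2:ℝ)) = 2 := by
    rw [show (2:ℝ) = ((2:ℕ):ℝ) by norm_num, ENNReal.ofReal_natCast]
    norm_num
  have hkey2 : ∀ᵐ x ∂volume.restrict S,
      g x ^ 2 ≤ C₁ * ∫ y in S, |k₀ (x + y)| * φ y ^ 2 := by
    filter_upwards [hslice, ae_restrict_mem hSm] with x hx hxS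
    set w : ℝ → ℝ := fun y => |k₀ (x + y)| with hwdef
    have hw : IntegrableOn w S volume := hkx x
    have hwm : Measurable w := habsm.comp (measurable_const.add measurable_id)
    have hf1m : Measurable fun y => Real.sqrt (w y) := Real.continuous_sqrt.measurable.comp hwm
    have h1 : |g x| ≤ ∫ y in S, w y * |φ y| := by
      calc |g x| = |∫ y in S, k₀ (x + y) * φ y| := rfl
        _ ≤ ∫ y in S, ‖k₀ (x + y) * φ y‖ := by
            rw [← Real.norm_eq_abs]
            exact norm_integral_le_integral_norm _
        _ = ∫ y in S, w y * |φ y| := by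
            congr 1
            funext y
            rw [norm_mul, Real.norm_eq_abs, Real.norm_eq_abs]
    have hm1 : MemLp (fun y => Real.sqrt (w y)) (ENNReal.ofReal 2) (volume.restrict S) := by
      rw [hrt2, memLp_two_iff_integrable_sq hf1m.aestronglyMeasurable]
      exact hw.congr (Eventually.of_forall fun y => (Real.sq_sqrt (abs_nonneg _)).symm)
    have hm2 : MemLp (fun y => Real.sqrt (w y) * |φ y|) (ENNReal.ofReal 2)
        (volume.restrict S) := by
      rw [hrt2, memLp_two_iff_integrable_sq (f := fun y => Real.sqrt (w y) * |φ y|)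
        (hf1m.mul hφm.abs).aestronglyMeasurable]
      apply hx.congr (Eventually.of_forall fun y => ?_)
      rw [mul_pow, Real.sq_sqrt (abs_nonneg _), sq_abs]
    have hCS := MeasureTheory.integral_mul_le_Lp_mul_Lq_of_nonneg (μ := volume.restrict S) hconj
      (Eventually.of_forall fun y => Real.sqrt_nonneg _)
      (Eventually.of_forall fun y => mul_nonneg (Real.sqrt_nonneg _) (abs_nonneg _)) hm1 hm2
    simp only [h2exp] at hCS
    have hCSL : (∫ y in S, Real.sqrt (w y) * (Real.sqrt (w y) * |φ y|)) =
        ∫ y in S, w y * |φ y| := by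
      congr 1
      funext y
      rw [← mul_assoc, Real.mul_self_sqrt (abs_nonneg _)]
    have hCSR1 : (∫ y in S, Real.sqrt (w y) ^ 2) = ∫ y in S, w y := by
      congr 1
      funext y
      rw [Real.sq_sqrt (abs_nonneg _)]
    have hCSR2 : (∫ y in S, (Real.sqrt (w y) * |φ y|) ^ 2) = ∫ y in S, w y * φ y ^ 2 := by
      congr 1
      funext y
      rw [mul_pow, Real.sq_sqrt (abs_nonneg _), sq_abs]
    rw [hCSL, hCSR1, hCSR2] at hCS
    set A : ℝ := ∫ y in S, w y with hA
    set B : ℝ := ∫ y in S, w y * φ y ^ 2 with hB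
    have hA0 : 0 ≤ A := setIntegral_nonneg hSm fun y _ => abs_nonneg _
    have hB0 : 0 ≤ B := setIntegral_nonneg hSm fun y _ =>
      mul_nonneg (abs_nonneg _) (sq_nonneg _)
    have hgle : |g x| ≤ A ^ (1/2:ℝ) * B ^ (1/2:ℝ) := le_trans h1 hCS
    have hsqle : g x ^ 2 ≤ (A ^ (1/2:ℝ) * B ^ (1/2:ℝ)) ^ 2 := by
      rw [← sq_abs (g x)]
      exact pow_le_pow_left₀ (abs_nonneg _) hgle 2
    have hAB : (A ^ (1/2:ℝ) * B ^ (1/2:ℝ)) ^ 2 = A * B := by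
      rw [mul_pow, ← Real.rpow_natCast (A ^ (1/2:ℝ)) 2, ← Real.rpow_natCast (B ^ (1/2:ℝ)) 2,
        ← Real.rpow_mul hA0, ← Real.rpow_mul hB0]
      norm_num
    calc g x ^ 2 ≤ A * B := by rw [← hAB]; exact hsqle
      _ ≤ C₁ * B := mul_le_mul_of_nonneg_right (hkxb x hxS) hB0
  have hgsq : Integrable (fun x => g x ^ 2) (volume.restrict S) := by
    apply Integrable.mono' (hG2i.const_mul C₁) (hgm.pow_const 2).aestronglyMeasurable
    filter_upwards [hkey2] with x hx
    rw [Real.norm_eq_abs, abs_of_nonneg (sq_nonneg _)]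
    exact hx
  have hg2 : MemLp g 2 (volume.restrict S) :=
    (memLp_two_iff_integrable_sq hgm.aestronglyMeasurable).2 hgsq
  set f : ℝ → ℝ := S.indicator g with hfdef
  have hf2 : MemLp f 2 (volume.restrict (Iio t)) := by
    rw [hfdef]
    apply (memLp_indicator_iff_restrict hSm).2
    rwa [Measure.restrict_restrict hSm, inter_eq_self_of_subset_left hSsub]
  -- the homogeneous-equation identity for g
  have hhom : ∀ x ∈ S, (∫ y in S, K (x + y) * g y) = ε * g x := by
    intro x hx
    have hKrep : ∀ y ∈ S, K (x + y) = ∫ s in Ioc (-t) y, k₀ (x + s) := by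
      intro y hy
      have h1 : K (x + y) - K (x + -t) = ∫ s in (x + -t)..(x + y), k₀ s := hKsub _ _
      rw [hK0 (x + -t) (by linarith [hx.2]), sub_zero] at h1
      rw [h1, show (x + -t) = (x + -t) from rfl, ← intervalIntegral.integral_comp_add_left k₀ x,
        intervalIntegral.integral_of_le (by linarith [hy.1] : -t ≤ y)]
    have hstep1 : (∫ y in S, K (x + y) * g y) =
        ∫ y in S, ∫ s in S, (Ioc (-t) y).indicator (fun s => k₀ (x + s)) s * g y := by
      apply setIntegral_congr_fun hSm
      intro y hy
      show K (x + y) * g y = ∫ s in S, (Ioc (-t) y).indicator (fun s => k₀ (x + s)) s * g y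
      rw [hKrep y hy,
        show (∫ s in Ioc (-t) y, k₀ (x + s)) =
            ∫ s in S, (Ioc (-t) y).indicator (fun s => k₀ (x + s)) s from by
          rw [setIntegral_indicator measurableSet_Ioc, inter_eq_self_of_subset_right
            (show Ioc (-t) y ⊆ S from fun u hu => ⟨hu.1, lt_of_le_of_lt hu.2 hy.2⟩)],
        ← integral_mul_const]
    have hintg : Integrable (Function.uncurry fun y s =>
        (Ioc (-t) y).indicator (fun s => k₀ (x + s)) s * g y)
        ((volume.restrict S).prod (volume.restrict S)) := by
      have hbd : Integrable (fun p : ℝ × ℝ => |g p.1| * |k₀ (x + p.2)|)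
          ((volume.restrict S).prod (volume.restrict S)) :=
        hgi.abs.mul_prod (hkx x)
      apply Integrable.mono' hbd
      · apply Measurable.aestronglyMeasurable
        have hmm : Measurable fun p : ℝ × ℝ =>
            (if p.2 ∈ Ioc (-t) p.1 then k₀ (x + p.2) else 0) * g p.1 := by
          refine Measurable.mul ?_ (hgm.comp measurable_fst)
          refine Measurable.ite ?_ (hk₀m.comp (measurable_const.add measurable_snd))
            measurable_const
          exact (measurableSet_lt measurable_const measurable_snd).inter
            (measurableSet_le measurable_snd measurable_fst)
        show Measurable fun p : ℝ × ℝ => (Ioc (-t) p.1).indicator (fun s => k₀ (x + s)) p.2 * g p.1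
        simpa [Function.uncurry, Set.indicator_apply] using hmm
      · refine Eventually.of_forall fun p => ?_
        simp only [Function.uncurry]
        rw [norm_mul]
        calc ‖(Ioc (-t) p.1).indicator (fun s => k₀ (x + s)) p.2‖ * ‖g p.1‖
            ≤ ‖k₀ (x + p.2)‖ * ‖g p.1‖ :=
              mul_le_mul_of_nonneg_right (norm_indicator_le_norm_self _ _) (norm_nonneg _)
          _ = |g p.1| * |k₀ (x + p.2)| := by
              rw [Real.norm_eq_abs, Real.norm_eq_abs, mul_comm]
    have hswap := integral_integral_swap
      (f := fun y s => (Ioc (-t) y).indicator (fun s => k₀ (x + s)) s * g y) hintg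
    have hinner : ∀ s ∈ S, (∫ y in S, (Ioc (-t) y).indicator (fun s => k₀ (x + s)) s * g y)
        = k₀ (x + s) * (ε * φ s) := by
      intro s hs
      have h5 : EqOn (fun y => (Ioc (-t) y).indicator (fun s => k₀ (x + s)) s * g y)
          (fun y => (Ici s).indicator (fun y => k₀ (x + s) * g y) y) S := by
        intro y _
        show (Ioc (-t) y).indicator (fun u => k₀ (x + u)) s * g y
            = (Ici s).indicator (fun u => k₀ (x + s) * g u) y
        by_cases hsy : s ≤ y
        · rw [indicator_of_mem (show s ∈ Ioc (-t) y from ⟨hs.1, hsy⟩),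
            indicator_of_mem (show y ∈ Ici s from hsy)]
        · rw [indicator_of_notMem (show s ∉ Ioc (-t) y from fun hmem => hsy hmem.2),
            indicator_of_notMem (show y ∉ Ici s from fun hmem => hsy hmem), zero_mul]
      rw [setIntegral_congr_fun hSm h5, setIntegral_indicator measurableSet_Ici]
      have h6 : S ∩ Ici s = Ico s t := by
        ext y
        simp only [hSdef, mem_inter_iff, mem_Ioo, mem_Ici, mem_Ico]
        constructor
        · rintro ⟨⟨_, h2⟩, h3⟩; exact ⟨h3, h2⟩
        · rintro ⟨h1, h2⟩; exact ⟨⟨lt_of_lt_of_le hs.1 h1, h2⟩, h1⟩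
      rw [h6, integral_const_mul]
      congr 1
      have h7 : (∫ y in Ico s t, g y) = ∫ y in Ioc s t, g y := by
        rw [show volume.restrict (Ico s t) = volume.restrict (Ioc s t) from
          Measure.restrict_congr_set Ico_ae_eq_Ioc]
      have h8 := hJdiff s t hs.2.le
      have h9 : Φ s = 1 - ε * J s := hΦval s hs
      have h10 : J t - J s = ε * Φ s := by
        have h11 : ε * (1 - ε * J s) = ε - J s := by
          rw [mul_sub, mul_one, ← mul_assoc, hε2, one_mul]
        rw [h9, h11, hJtval]
      rw [h7, ← h8, h10, hφeqΦ s hs]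
    calc (∫ y in S, K (x + y) * g y)
        = ∫ y in S, ∫ s in S, (Ioc (-t) y).indicator (fun s => k₀ (x + s)) s * g y := hstep1
      _ = ∫ s in S, ∫ y in S, (Ioc (-t) y).indicator (fun s => k₀ (x + s)) s * g y := hswap
      _ = ∫ s in S, k₀ (x + s) * (ε * φ s) := setIntegral_congr_fun hSm fun s hs => hinner s hs
      _ = ε * g x := by
          rw [show (fun s => k₀ (x + s) * (ε * φ s)) = fun s => ε * (k₀ (x + s) * φ s) from
            funext fun s => by ring]
          rw [integral_const_mul]
  -- apply the injectivity hypothesis to f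
  have hfeq : ∀ᵐ x ∂volume.restrict (Iio t),
      f x - ε * ∫ y in Iio t, K (x + y) * f y = 0 := by
    filter_upwards [ae_restrict_mem measurableSet_Iio, ae_restrict_of_ae (ae_ne_pt (-t))]
      with x hxt hxne
    have hintf : (∫ y in Iio t, K (x + y) * f y) = ∫ y in S, K (x + y) * g y := by
      rw [show (fun y => K (x + y) * f y) =
          fun y => S.indicator (fun y => K (x + y) * g y) y from
        funext fun y => show K (x + y) * f y = S.indicator (fun y => K (x + y) * g y) y from
          (indicator_mul_right S (fun y => K (x + y)) g).symm]
      rw [setIntegral_indicator hSm, inter_eq_self_of_subset_right hSsub]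
    by_cases hxS : x ∈ S
    · rw [hintf, hhom x hxS, hfdef, indicator_of_mem hxS, ← mul_assoc, hε2, one_mul, sub_self]
    · have hxlt : x < -t := by
        rcases lt_or_ge x (-t) with h | h
        · exact h
        · exact absurd ⟨lt_of_le_of_ne h (Ne.symm hxne), hxt⟩ hxS
      have hz : ∀ y, K (x + y) * f y = 0 := by
        intro y
        by_cases hyS : y ∈ S
        · rw [hK0 (x + y) (by linarith [hyS.2] : x + y < 0), zero_mul]
        · rw [hfdef, indicator_of_notMem hyS, mul_zero]
      rw [hfdef, indicator_of_notMem hxS]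
      simp only [show ∀ y, K (x + y) * S.indicator g y = 0 from hz, integral_zero, mul_zero, sub_zero]
  have hf0 := hinj f hf2 hfeq
  have hg0 : ∀ᵐ x ∂volume.restrict S, g x = 0 := by
    have h1 := ae_restrict_of_ae_restrict_of_subset hSsub hf0
    filter_upwards [h1, ae_restrict_mem hSm] with x h2 h3
    have h4 : f x = 0 := h2
    rw [hfdef, indicator_of_mem h3] at h4
    exact h4
  have hΦzero : ∀ s ∈ S, Φ s = 0 := by
    intro s hs
    have h8 := hJdiff s t hs.2.le
    have h2 : (∫ y in Ioc s t, g y) = 0 := by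
      apply integral_eq_zero_of_ae
      rw [← Measure.restrict_congr_set Ioo_ae_eq_Ioc]
      exact ae_restrict_of_ae_restrict_of_subset (Ioo_subset_Ioo_left hs.1.le) hg0
    have h9 : Φ s = 1 - ε * J s := hΦval s hs
    have h10 : J s = J t := by
      rw [h2] at h8
      linarith
    rw [h9, h10]
    linarith
  have h0S : (0:ℝ) ∈ S := ⟨by linarith, ht⟩
  have hcontr := hΦeq 0 h0S
  rw [hIJ 0] at hcontr
  have hz2 : (∫ y in S, K (0 + y) * φ y) = 0 := by
    rw [setIntegral_congr_fun hSm (show EqOn (fun y => K ((0:ℝ) + y) * φ y)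
      (fun _ => (0:ℝ)) S from fun y hy => by
        simp only
        rw [hφeqΦ y hy, hΦzero y hy, mul_zero])]
    simp
  rw [hΦzero 0 h0S, hz2, mul_zero, add_zero] at hcontr
  exact zero_ne_one hcontr

/-- existence and non-vanishing of the one-sided limits `Φ(t⁻)`, `Ψ(t⁻)`
for solutions of the integral equations `Φ + K[t]Φ = 1` and `Ψ - K[t]Ψ = 1`,
under injectivity of `1 ∓ K[t]` on `L²((-∞,t))`. -/
theorem statement0 (t : ℝ) (ht : 0 < t) (K k : ℝ → ℝ)
    (hK0 : ∀ x < (0:ℝ), K x = 0)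
    (hk : LocallyIntegrableOn k (Ici 0))
    (hKk : ∀ x ≥ (0:ℝ), K x = ∫ y in (0:ℝ)..x, k y)
    (Φ Ψ : ℝ → ℝ)
    -- part (a): hypotheses on Φ
    (hΦ0 : ∀ x < -t, Φ x = 0)
    (hΦc : ContinuousOn Φ (Ioo (-t) t))
    (hΦ2 : MemLp Φ 2 (volume.restrict (Ioo (-t) t)))
    (hΦeq : ∀ x ∈ Ioo (-t) t, Φ x + ∫ y in Iio t, K (x + y) * Φ y = 1)
    (hminus : ∀ f : ℝ → ℝ, MemLp f 2 (volume.restrict (Iio t)) →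
      (∀ᵐ x ∂volume.restrict (Iio t), f x - ∫ y in Iio t, K (x + y) * f y = 0) →
      f =ᵐ[volume.restrict (Iio t)] 0)
    -- part (b): hypotheses on Ψ
    (hΨ0 : ∀ x < -t, Ψ x = 0)
    (hΨc : ContinuousOn Ψ (Ioo (-t) t))
    (hΨ2 : MemLp Ψ 2 (volume.restrict (Ioo (-t) t)))
    (hΨeq : ∀ x ∈ Ioo (-t) t, Ψ x - ∫ y in Iio t, K (x + y) * Ψ y = 1)
    (hplus : ∀ f : ℝ → ℝ, MemLp f 2 (volume.restrict (Iio t)) →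
      (∀ᵐ x ∂volume.restrict (Iio t), f x + ∫ y in Iio t, K (x + y) * f y = 0) →
      f =ᵐ[volume.restrict (Iio t)] 0) :
    (∃ L : ℝ, L ≠ 0 ∧ Tendsto Φ (nhdsWithin t (Iio t)) (nhds L)) ∧
    (∃ L : ℝ, L ≠ 0 ∧ Tendsto Ψ (nhdsWithin t (Iio t)) (nhds L)) := by
  classical
  -- build a measurable representative of the kernel density
  have hkaesm : AEStronglyMeasurable k (volume.restrict (Ici 0)) := hk.aestronglyMeasurable
  set km : ℝ → ℝ := hkaesm.mk k with hkmdef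
  have hmk : Measurable km := hkaesm.stronglyMeasurable_mk.measurable
  have hkeq : k =ᵐ[volume.restrict (Ici 0)] km := hkaesm.ae_eq_mk
  set k₀ : ℝ → ℝ := (Ici (0:ℝ)).indicator km with hk₀def
  have hk₀m : Measurable k₀ := hmk.indicator measurableSet_Ici
  have hk₀i : ∀ a b : ℝ, IntegrableOn k₀ (Icc a b) volume := by
    intro a b
    rw [hk₀def, IntegrableOn, integrable_indicator_iff measurableSet_Ici]
    rw [IntegrableOn, Measure.restrict_restrict measurableSet_Ici]
    have h1 : IntegrableOn k (Icc 0 (max 0 b)) volume := by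
      apply hk.integrableOn_compact_subset (Icc_subset_Ici_self) isCompact_Icc
    have h2 : IntegrableOn km (Icc 0 (max 0 b)) volume :=
      h1.congr (ae_restrict_of_ae_restrict_of_subset Icc_subset_Ici_self hkeq)
    exact h2.mono_set fun x hx => ⟨hx.1, le_trans hx.2.2 (le_max_right 0 b)⟩
  have hKdef : ∀ x : ℝ, K x = ∫ s in (0:ℝ)..x, k₀ s := by
    intro x
    rcases le_or_gt 0 x with hx | hx
    · rw [hKk x hx, intervalIntegral.integral_of_le hx, intervalIntegral.integral_of_le hx]
      apply setIntegral_congr_ae measurableSet_Ioc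
      have h1 : ∀ᵐ y ∂(volume : Measure ℝ), y ∈ Ici (0:ℝ) → k y = km y :=
        (ae_restrict_iff' measurableSet_Ici).mp hkeq
      filter_upwards [h1] with y hy hyIoc
      rw [show k₀ y = km y from indicator_of_mem (show y ∈ Ici (0:ℝ) from le_of_lt hyIoc.1) km]
      exact hy (le_of_lt hyIoc.1)
    · rw [hK0 x hx, intervalIntegral.integral_symm]
      rw [intervalIntegral.integral_of_le hx.le]
      have h1 : (∫ s in Ioc x 0, k₀ s) = 0 := by
        apply integral_eq_zero_of_ae
        filter_upwards [ae_restrict_of_ae (ae_ne_pt 0), ae_restrict_mem measurableSet_Ioc]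
          with y hy hyIoc
        exact indicator_of_notMem (show y ∉ Ici (0:ℝ) from by
          simp only [mem_Ici, not_le]
          exact lt_of_le_of_ne hyIoc.2 hy) km
      rw [h1, neg_zero]
  constructor
  · apply key_lemma t ht K k₀ hk₀m hk₀i hKdef hK0 1 (Or.inl rfl) Φ hΦ0 hΦc hΦ2
    · intro x hx; rw [one_mul]; exact hΦeq x hx
    · intro f hf hae
      apply hminus f hf
      filter_upwards [hae] with x hx
      rw [one_mul] at hx
      exact hx
  · apply key_lemma t ht K k₀ hk₀m hk₀i hKdef hK0 (-1) (Or.inr rfl) Ψ hΨ0 hΨc hΨ2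
    · intro x hx; have := hΨeq x hx; linarith
    · intro f hf hae
      apply hplus f hf
      filter_upwards [hae] with x hx
      linarith
end

section
/- Let τ > 0, let K : ℝ → ℝ satisfy the kernel hypotheses, and let Φ : (0, τ) × ℝ → ℝ be such that for each t ∈ (0, τ): Φ(t, x) = 0 for x < −t, and Φ(t, x) + ∫_{−∞}^t K(x+y) Φ(t, y) dy = 1 for all x ∈ (−t, t). Assume the partial derivatives ∂Φ/∂x and ∂Φ/∂t exist and are jointly continuous on {(t, x) : 0 < t < τ, −t < x ≤ t} (values at x = t understood as one-sided limits), and that Φ(t, t) := lim_{x→t⁻} Φ(t, x) is nonzero for every t ∈ (0, τ). Define φ⁺(t, x) := −(∂Φ/∂t)(t, x)/Φ(t, t) and φ⁻(t, x) := −(∂Φ/∂x)(t, x)/Φ(t, t), with φ±(t, t) := lim_{x→t⁻} φ±(t, x). Then the function t ↦ Φ(t, t) is differentiable on (0, τ) and satisfies (d/dt)Φ(t, t) = −Φ(t, t) · (φ⁺(t, t) + φ⁻(t, t)). If moreover lim_{t→0⁺} Φ(t, t) = 1 and τ′ ↦ φ⁺(τ′, τ′) + φ⁻(τ′, τ′)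 is integrable near 0, then Φ(t, t) = exp(−∫₀ᵗ (φ⁺(τ′, τ′) + φ⁻(τ′, τ′)) dτ′) for all t ∈ (0, τ); equivalently m(t) · Φ(t, t) = 1, where m(t) := exp(∫₀ᵗ (φ⁺(τ′, τ′) + φ⁻(τ′, τ′)) dτ′). -/
open MeasureTheory Set Filter

set_option maxHeartbeats 1000000 in
/-- the derivative formula `(d/dt)Φ(t,t) = -Φ(t,t)(φ⁺(t,t)+φ⁻(t,t))` and the
consequent formula `Φ(t,t) = exp(-∫₀ᵗ (φ⁺+φ⁻))`, i.e. `m(t)Φ(t,t) = 1`.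
Here `Λ t` denotes the one-sided limit `Φ(t,t) = lim_{x→t⁻} Φ(t,x)`,
`φ⁺(t,t) = -(∂Φ/∂t)(t,t)/Φ(t,t)` and `φ⁻(t,t) = -(∂Φ/∂x)(t,t)/Φ(t,t)`
(values at `x = t` are the one-sided limits, enforced by joint continuity up to `x = t`). -/
theorem statement3 (τ : ℝ) (hτ : 0 < τ) (K k : ℝ → ℝ)
    (hK0 : ∀ x < (0:ℝ), K x = 0)
    (hk : LocallyIntegrableOn k (Ici 0))
    (hKk : ∀ x ≥ (0:ℝ), K x = ∫ y in (0:ℝ)..x, k y)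
    (Φ Φx Φt : ℝ → ℝ → ℝ) (Λ : ℝ → ℝ)
    (hΦ0 : ∀ t ∈ Ioo 0 τ, ∀ x < -t, Φ t x = 0)
    (hΦeq : ∀ t ∈ Ioo 0 τ, ∀ x ∈ Ioo (-t) t,
      Φ t x + ∫ y in Iio t, K (x + y) * Φ t y = 1)
    (hdx : ∀ t ∈ Ioo 0 τ, ∀ x ∈ Ioo (-t) t, HasDerivAt (Φ t) (Φx t x) x)
    (hdt : ∀ t ∈ Ioo 0 τ, ∀ x ∈ Ioo (-t) t, HasDerivAt (fun u => Φ u x) (Φt t x) t)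
    (hcx : ContinuousOn (fun p : ℝ × ℝ => Φx p.1 p.2)
      {p : ℝ × ℝ | 0 < p.1 ∧ p.1 < τ ∧ -p.1 < p.2 ∧ p.2 ≤ p.1})
    (hct : ContinuousOn (fun p : ℝ × ℝ => Φt p.1 p.2)
      {p : ℝ × ℝ | 0 < p.1 ∧ p.1 < τ ∧ -p.1 < p.2 ∧ p.2 ≤ p.1})
    (hΛlim : ∀ t ∈ Ioo 0 τ, Tendsto (Φ t) (nhdsWithin t (Iio t)) (nhds (Λ t)))
    (hΛne : ∀ t ∈ Ioo 0 τ, Λ t ≠ 0) :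
    -- t ↦ Φ(t,t) is differentiable and (d/dt)Φ(t,t) = -Φ(t,t)(φ⁺(t,t)+φ⁻(t,t))
    (∀ t ∈ Ioo 0 τ,
      HasDerivAt Λ (-(Λ t) * ((-(Φt t t) / Λ t) + (-(Φx t t) / Λ t))) t) ∧
    -- if Φ(t,t) → 1 as t → 0⁺ and φ⁺(t,t)+φ⁻(t,t) is integrable near 0, then
    -- Φ(t,t) = exp(-∫₀ᵗ(φ⁺+φ⁻)) and m(t)·Φ(t,t) = 1
    (Tendsto Λ (nhdsWithin 0 (Ioi 0)) (nhds 1) →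
      (∀ t ∈ Ioo 0 τ, IntegrableOn
        (fun u => (-(Φt u u) / Λ u) + (-(Φx u u) / Λ u)) (Ioc 0 t)) →
      ∀ t ∈ Ioo 0 τ,
        Λ t = Real.exp (-∫ u in (0:ℝ)..t, ((-(Φt u u) / Λ u) + (-(Φx u u) / Λ u))) ∧
        Real.exp (∫ u in (0:ℝ)..t, ((-(Φt u u) / Λ u) + (-(Φx u u) / Λ u))) * Λ t = 1) := by
  -- notation for the continuity region
  set S : Set (ℝ × ℝ) := {p : ℝ × ℝ | 0 < p.1 ∧ p.1 < τ ∧ -p.1 < p.2 ∧ p.2 ≤ p.1} with hS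
  -- continuity of x ↦ Φx t x on (-t, t]
  have sliceX : ∀ t ∈ Ioo 0 τ, ContinuousOn (fun y => Φx t y) (Ioc (-t) t) := by
    intro t ht
    exact hcx.comp ((continuous_const.prodMk continuous_id).continuousOn)
      (fun y hy => ⟨ht.1, ht.2, hy.1, hy.2⟩)
  -- continuity of s ↦ Φt s x on [t₁, t₂] when x < min
  have sliceT : ∀ (x t₁ t₂ : ℝ), t₁ ∈ Ioo 0 τ → t₂ ∈ Ioo 0 τ →
      x ∈ Ioo (-(min t₁ t₂)) (min t₁ t₂) →
      ContinuousOn (fun s => Φt s x) (uIcc t₁ t₂) := by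
    intro x t₁ t₂ h₁ h₂ hx
    apply hct.comp ((continuous_id.prodMk continuous_const).continuousOn)
    intro s hs
    rw [Set.uIcc, Set.mem_Icc] at hs
    have h0 : 0 < min t₁ t₂ := lt_min h₁.1 h₂.1
    have hτ' : max t₁ t₂ < τ := max_lt h₁.2 h₂.2
    have hx1 := hx.1
    have hx2 := hx.2
    rw [neg_lt] at hx1
    exact ⟨show (0:ℝ) < s by linarith [hs.1], show s < τ by linarith [hs.2],
      show -s < x by rw [neg_lt]; linarith [hs.1], show x ≤ s by linarith [hs.1]⟩
  -- FTC in t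
  have tFTC : ∀ (t₁ : ℝ), t₁ ∈ Ioo 0 τ → ∀ (t₂ : ℝ), t₂ ∈ Ioo 0 τ →
      ∀ x ∈ Ioo (-(min t₁ t₂)) (min t₁ t₂),
      ∫ s in t₁..t₂, Φt s x = Φ t₂ x - Φ t₁ x := by
    intro t₁ h₁ t₂ h₂ x hx
    apply intervalIntegral.integral_eq_sub_of_hasDerivAt
    · intro s hs
      rw [Set.uIcc, Set.mem_Icc] at hs
      have h0 : 0 < min t₁ t₂ := lt_min h₁.1 h₂.1
      have hτ' : max t₁ t₂ < τ := max_lt h₁.2 h₂.2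
      have hx1 := hx.1; have hx2 := hx.2
      rw [neg_lt] at hx1
      exact hdt s ⟨by linarith [hs.1], by linarith [hs.2]⟩ x
        ⟨by rw [neg_lt]; linarith [hs.1], by linarith [hs.1]⟩
    · exact (sliceT x t₁ t₂ h₁ h₂ hx).intervalIntegrable
  -- the Λ identity: Λ t = Φ t x + ∫ y in x..t, Φx t y
  have lamEq : ∀ t ∈ Ioo 0 τ, ∀ x ∈ Ioo (-t) t,
      Λ t = Φ t x + ∫ y in x..t, Φx t y := by
    intro t ht x hx
    have hxt : x < t := hx.2
    have hcont : ContinuousOn (fun y => Φx t y) (Ioc (-t) t) := sliceX t ht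
    have hsub : Icc x t ⊆ Ioc (-t) t := fun y hy => ⟨lt_of_lt_of_le hx.1 hy.1, hy.2⟩
    have hIntOn : IntegrableOn (fun y => Φx t y) (Icc x t) :=
      (hcont.mono hsub).integrableOn_Icc
    have hInt : IntervalIntegrable (fun y => Φx t y) volume x t := by
      rw [intervalIntegrable_iff_integrableOn_Icc_of_le hxt.le]; exact hIntOn
    have hP : ContinuousOn (fun y => ∫ z in x..y, Φx t z) (Icc x t) := by
      have h := intervalIntegral.continuousOn_primitive_interval
        (μ := volume) (f := fun y => Φx t y) (a := x) (b := t)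
        (by rwa [uIcc_of_le hxt.le])
      rwa [uIcc_of_le hxt.le] at h
    have ev : ∀ᶠ y in nhdsWithin t (Iio t), Φ t y = Φ t x + ∫ z in x..y, Φx t z := by
      have hmem : Ioo x t ∈ nhdsWithin t (Iio t) := by
        rw [← nhdsWithin_Ioo_eq_nhdsLT hxt]; exact self_mem_nhdsWithin
      filter_upwards [hmem] with y hy
      have heq : ∫ z in x..y, Φx t z = Φ t y - Φ t x := by
        apply intervalIntegral.integral_eq_sub_of_hasDerivAt
        · intro z hz
          rw [uIcc_of_le hy.1.le, Set.mem_Icc] at hz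
          exact hdx t ht z ⟨lt_of_lt_of_le hx.1 hz.1, lt_of_le_of_lt hz.2 hy.2⟩
        · exact hInt.mono_set (by
            rw [uIcc_of_le hy.1.le, uIcc_of_le hxt.le]
            exact Icc_subset_Icc le_rfl hy.2.le)
      linarith [heq]
    have lim2 : Tendsto (fun y => Φ t x + ∫ z in x..y, Φx t z) (nhdsWithin t (Iio t))
        (nhds (Φ t x + ∫ z in x..t, Φx t z)) := by
      have hc : ContinuousWithinAt (fun y => ∫ z in x..y, Φx t z) (Icc x t) t :=
        hP t (right_mem_Icc.mpr hxt.le)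
      refine tendsto_const_nhds.add ?_
      have h2 : Tendsto (fun y => ∫ z in x..y, Φx t z) (nhdsWithin t (Ioo x t))
          (nhds (∫ z in x..t, Φx t z)) :=
        hc.tendsto.mono_left (nhdsWithin_mono _ Ioo_subset_Icc_self)
      rwa [nhdsWithin_Ioo_eq_nhdsLT hxt] at h2
    have lim3 : Tendsto (Φ t) (nhdsWithin t (Iio t))
        (nhds (Φ t x + ∫ z in x..t, Φx t z)) :=
      lim2.congr' (ev.mono fun y hy => hy.symm)
    exact (tendsto_nhds_unique (hΛlim t ht) lim3)
  -- the main derivative formula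
  have main : ∀ t₀ ∈ Ioo 0 τ, HasDerivAt Λ (Φt t₀ t₀ + Φx t₀ t₀) t₀ := by
    intro t₀ ht₀
    have hmem₀ : ((t₀, t₀) : ℝ × ℝ) ∈ S := ⟨ht₀.1, ht₀.2, show -t₀ < t₀ by linarith [ht₀.1], le_rfl⟩
    rw [hasDerivAt_iff_isLittleO, Asymptotics.isLittleO_iff]
    intro c hc
    have hεpos : 0 < c / 5 := by positivity
    obtain ⟨δ₁, hδ₁pos, hδ₁⟩ := Metric.continuousWithinAt_iff.mp (hcx _ hmem₀) (c/5) hεpos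
    obtain ⟨δ₂, hδ₂pos, hδ₂⟩ := Metric.continuousWithinAt_iff.mp (hct _ hmem₀) (c/5) hεpos
    set r := min (min δ₁ δ₂ / 2) (min (t₀ / 2) ((τ - t₀) / 2)) with hrdef
    have hrpos : 0 < r := by
      apply lt_min (by positivity)
      exact lt_min (by linarith [ht₀.1]) (by linarith [ht₀.2])
    have hev : ∀ᶠ t in nhds t₀, |t - t₀| < r := by
      filter_upwards [Metric.ball_mem_nhds t₀ hrpos] with t ht
      rwa [Metric.mem_ball, Real.dist_eq] at ht
    filter_upwards [hev] with t htr
    by_cases hteq : t = t₀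
    · simp [hteq]
    have hΔpos : 0 < |t - t₀| := abs_pos.mpr (sub_ne_zero.mpr hteq)
    set Δ := |t - t₀| with hΔdef
    have hΔδ₁ : 2 * Δ < δ₁ := by
      have h1 : r ≤ min δ₁ δ₂ / 2 := min_le_left _ _
      have h2 : min δ₁ δ₂ ≤ δ₁ := min_le_left _ _
      linarith
    have hΔδ₂ : 2 * Δ < δ₂ := by
      have h1 : r ≤ min δ₁ δ₂ / 2 := min_le_left _ _
      have h2 : min δ₁ δ₂ ≤ δ₂ := min_le_right _ _
      linarith
    have hΔt₀ : Δ < t₀ / 2 := lt_of_lt_of_le htr ((min_le_right _ _).trans (min_le_left _ _))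
    have hΔτ : Δ < (τ - t₀) / 2 := lt_of_lt_of_le htr ((min_le_right _ _).trans (min_le_right _ _))
    have habs := abs_le.mp (le_refl Δ)
    have htlb : t₀ - Δ ≤ t := by rw [hΔdef] at habs ⊢; linarith [habs.1]
    have htub : t ≤ t₀ + Δ := by linarith [habs.2]
    set m := min t t₀ with hmdef
    have hmt : m ≤ t := min_le_left _ _
    have hmt₀ : m ≤ t₀ := min_le_right _ _
    have hmlb : t₀ - Δ ≤ m := le_min htlb (by linarith)
    have htmΔ : t - Δ ≤ m := by
      rcases le_total t t₀ with h | h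
      · have hm : m = t := min_eq_left h
        linarith
      · have hm : m = t₀ := min_eq_right h
        have h2 := le_abs_self (t - t₀)
        rw [hΔdef]
        linarith
    set x := m - Δ with hxdef
    have ht_in : t ∈ Ioo 0 τ := ⟨by linarith, by linarith⟩
    have hmpos : 0 < m := by linarith
    have hxm : x < m := by rw [hxdef]; linarith
    have hxgt : -m < x := by rw [hxdef]; linarith
    have hxlb : t₀ - 2 * Δ ≤ x := by rw [hxdef]; linarith
    have hx_t : x ∈ Ioo (-t) t := ⟨by linarith, by linarith⟩
    have hx_t₀ : x ∈ Ioo (-t₀) t₀ := ⟨by linarith, by linarith⟩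
    -- identities
    have E1 := lamEq t ht_in x hx_t
    have E2 := lamEq t₀ ht₀ x hx_t₀
    have E3 : ∫ s in t₀..t, Φt s x = Φ t x - Φ t₀ x := by
      apply tFTC t₀ ht₀ t ht_in x
      rw [min_comm]
      exact ⟨hxgt, hxm⟩
    -- integrability
    have iT : IntervalIntegrable (fun s => Φt s x) volume t₀ t := by
      apply (sliceT x t₀ t ht₀ ht_in ?_).intervalIntegrable
      rw [min_comm]; exact ⟨hxgt, hxm⟩
    have iX1 : IntervalIntegrable (fun y => Φx t y) volume x t := by
      rw [intervalIntegrable_iff_integrableOn_Icc_of_le (by linarith : x ≤ t)]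
      exact ((sliceX t ht_in).mono
        (fun y hy => ⟨lt_of_lt_of_le hx_t.1 hy.1, hy.2⟩)).integrableOn_Icc
    have iX2 : IntervalIntegrable (fun y => Φx t₀ y) volume x t₀ := by
      rw [intervalIntegrable_iff_integrableOn_Icc_of_le (by linarith : x ≤ t₀)]
      exact ((sliceX t₀ ht₀).mono
        (fun y hy => ⟨lt_of_lt_of_le hx_t₀.1 hy.1, hy.2⟩)).integrableOn_Icc
    -- pointwise bounds
    have hb1 : ∀ s ∈ Set.uIoc t₀ t, ‖Φt s x - Φt t₀ t₀‖ ≤ c / 5 := by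
      intro s hs
      have hs' := Set.uIoc_subset_uIcc hs
      rw [Set.uIcc, Set.mem_Icc] at hs'
      have hsl : t₀ - Δ ≤ s := by
        have h1 : t₀ - Δ ≤ min t₀ t := le_min (by linarith) htlb
        exact le_trans h1 hs'.1
      have hsu : s ≤ t₀ + Δ := le_trans hs'.2 (max_le (by linarith) htub)
      have hmem : ((s, x) : ℝ × ℝ) ∈ S :=
        ⟨by linarith, by linarith, show -s < x by linarith, by linarith⟩
      have hdist : dist ((s, x) : ℝ × ℝ) ((t₀, t₀) : ℝ × ℝ) < δ₂ := by
        rw [Prod.dist_eq]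
        apply max_lt <;> rw [Real.dist_eq]
        · have ha : |s - t₀| ≤ Δ := abs_le.mpr ⟨by linarith, by linarith⟩
          linarith
        · have ha : |x - t₀| ≤ 2 * Δ := abs_le.mpr ⟨by linarith, by linarith⟩
          linarith
      have := hδ₂ hmem hdist
      rw [Real.dist_eq] at this
      exact this.le
    have hb2 : ∀ y ∈ Set.uIoc x t, ‖Φx t y - Φx t₀ t₀‖ ≤ c / 5 := by
      intro y hy
      have hy' := Set.uIoc_subset_uIcc hy
      rw [Set.uIcc_of_le (by linarith : x ≤ t), Set.mem_Icc] at hy'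
      have hmem : ((t, y) : ℝ × ℝ) ∈ S :=
        ⟨ht_in.1, ht_in.2, show -t < y by linarith [hy'.1], hy'.2⟩
      have hdist : dist ((t, y) : ℝ × ℝ) ((t₀, t₀) : ℝ × ℝ) < δ₁ := by
        rw [Prod.dist_eq]
        apply max_lt <;> rw [Real.dist_eq]
        · have ha : |t - t₀| ≤ Δ := le_of_eq hΔdef.symm
          linarith
        · have ha : |y - t₀| ≤ 2 * Δ :=
            abs_le.mpr ⟨by linarith [hy'.1], by linarith [hy'.2, htub]⟩
          linarith
      have := hδ₁ hmem hdist
      rw [Real.dist_eq] at this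
      exact this.le
    have hb3 : ∀ y ∈ Set.uIoc x t₀, ‖Φx t₀ y - Φx t₀ t₀‖ ≤ c / 5 := by
      intro y hy
      have hy' := Set.uIoc_subset_uIcc hy
      rw [Set.uIcc_of_le (by linarith : x ≤ t₀), Set.mem_Icc] at hy'
      have hmem : ((t₀, y) : ℝ × ℝ) ∈ S :=
        ⟨ht₀.1, ht₀.2, show -t₀ < y by linarith [hy'.1], hy'.2⟩
      have hdist : dist ((t₀, y) : ℝ × ℝ) ((t₀, t₀) : ℝ × ℝ) < δ₁ := by
        rw [Prod.dist_eq]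
        apply max_lt <;> rw [Real.dist_eq]
        · have : |t₀ - t₀| = 0 := by simp
          linarith
        · have ha : |y - t₀| ≤ 2 * Δ :=
            abs_le.mpr ⟨by linarith [hy'.1], by linarith [hy'.2]⟩
          linarith
      have := hδ₁ hmem hdist
      rw [Real.dist_eq] at this
      exact this.le
    -- the decomposition
    have key : Λ t - Λ t₀ - (t - t₀) * (Φt t₀ t₀ + Φx t₀ t₀)
        = (∫ s in t₀..t, (Φt s x - Φt t₀ t₀))
          + (∫ y in x..t, (Φx t y - Φx t₀ t₀))
          - (∫ y in x..t₀, (Φx t₀ y - Φx t₀ t₀)) := by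
      rw [intervalIntegral.integral_sub iT intervalIntegrable_const,
          intervalIntegral.integral_sub iX1 intervalIntegrable_const,
          intervalIntegral.integral_sub iX2 intervalIntegrable_const,
          intervalIntegral.integral_const, intervalIntegral.integral_const,
          intervalIntegral.integral_const, E3]
      simp only [smul_eq_mul]
      have hr : (t - t₀) * (Φt t₀ t₀ + Φx t₀ t₀)
          = (t - t₀) * Φt t₀ t₀ + (t - x) * Φx t₀ t₀ - (t₀ - x) * Φx t₀ t₀ := by ring
      rw [E1, E2]
      linarith [hr]
    -- bounds on the three integrals
    have n1 : ‖∫ s in t₀..t, (Φt s x - Φt t₀ t₀)‖ ≤ c / 5 * Δ := by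
      exact intervalIntegral.norm_integral_le_of_norm_le_const hb1
    have n2 : ‖∫ y in x..t, (Φx t y - Φx t₀ t₀)‖ ≤ c / 5 * (2 * Δ) := by
      have h := intervalIntegral.norm_integral_le_of_norm_le_const hb2
      have htx : |t - x| ≤ 2 * Δ := abs_le.mpr ⟨by linarith, by linarith⟩
      calc ‖∫ y in x..t, (Φx t y - Φx t₀ t₀)‖ ≤ c / 5 * |t - x| := h
        _ ≤ c / 5 * (2 * Δ) := by nlinarith [abs_nonneg (t - x)]
    have n3 : ‖∫ y in x..t₀, (Φx t₀ y - Φx t₀ t₀)‖ ≤ c / 5 * (2 * Δ) := by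
      have h := intervalIntegral.norm_integral_le_of_norm_le_const hb3
      have htx : |t₀ - x| ≤ 2 * Δ := abs_le.mpr ⟨by linarith, by linarith⟩
      calc ‖∫ y in x..t₀, (Φx t₀ y - Φx t₀ t₀)‖ ≤ c / 5 * |t₀ - x| := h
        _ ≤ c / 5 * (2 * Δ) := by nlinarith [abs_nonneg (t₀ - x)]
    rw [Real.norm_eq_abs, Real.norm_eq_abs, smul_eq_mul, key]
    have htri : |(∫ s in t₀..t, (Φt s x - Φt t₀ t₀))
          + (∫ y in x..t, (Φx t y - Φx t₀ t₀))
          - (∫ y in x..t₀, (Φx t₀ y - Φx t₀ t₀))|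
        ≤ |∫ s in t₀..t, (Φt s x - Φt t₀ t₀)|
          + |∫ y in x..t, (Φx t y - Φx t₀ t₀)|
          + |∫ y in x..t₀, (Φx t₀ y - Φx t₀ t₀)| := by
      rw [sub_eq_add_neg]
      refine (abs_add_le _ _).trans ?_
      rw [abs_neg]
      exact add_le_add (abs_add_le _ _) le_rfl
    simp only [Real.norm_eq_abs] at n1 n2 n3
    linarith
  refine ⟨?_, ?_⟩
  · intro t ht
    have h := main t ht
    have hΛt := hΛne t ht
    have : -(Λ t) * ((-(Φt t t) / Λ t) + (-(Φx t t) / Λ t)) = Φt t t + Φx t t := by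
      field_simp
      ring
    rw [this]
    exact h
  · intro hΛ1 hint t ht
    set g : ℝ → ℝ := fun u => (-(Φt u u) / Λ u) + (-(Φx u u) / Λ u) with hg
    set G : ℝ → ℝ := fun t => ∫ u in (0:ℝ)..t, g u with hG
    -- continuity of g on Ioo 0 τ
    have hcontΛ : ContinuousOn Λ (Ioo 0 τ) := fun s hs =>
      ((main s hs).continuousAt).continuousWithinAt
    have hdiag_t : ContinuousOn (fun u => Φt u u) (Ioo 0 τ) :=
      hct.comp ((continuous_id.prodMk continuous_id).continuousOn)
        (fun u hu => ⟨show (0:ℝ) < u from hu.1, show u < τ from hu.2,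
          show -u < u by linarith [hu.1], show u ≤ u from le_rfl⟩)
    have hdiag_x : ContinuousOn (fun u => Φx u u) (Ioo 0 τ) :=
      hcx.comp ((continuous_id.prodMk continuous_id).continuousOn)
        (fun u hu => ⟨show (0:ℝ) < u from hu.1, show u < τ from hu.2,
          show -u < u by linarith [hu.1], show u ≤ u from le_rfl⟩)
    have hcg : ContinuousOn g (Ioo 0 τ) := by
      apply ContinuousOn.add
      · exact (hdiag_t.neg).div hcontΛ (fun s hs => hΛne s hs)
      · exact (hdiag_x.neg).div hcontΛ (fun s hs => hΛne s hs)
    -- derivative of G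
    have hGd : ∀ s ∈ Ioo 0 τ, HasDerivAt G (g s) s := by
      intro s hs
      apply intervalIntegral.integral_hasDerivAt_right
      · rw [intervalIntegrable_iff_integrableOn_Ioc_of_le hs.1.le]
        exact hint s hs
      · exact ContinuousOn.stronglyMeasurableAtFilter isOpen_Ioo hcg s hs
      · exact hcg.continuousAt (isOpen_Ioo.mem_nhds hs)
    -- F = exp(G) * Λ has derivative 0 on Ioo 0 τ
    set F : ℝ → ℝ := fun s => Real.exp (G s) * Λ s with hF
    have hFd : ∀ s ∈ Ioo 0 τ, HasDerivAt F 0 s := by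
      intro s hs
      have h1 : HasDerivAt (fun u => Real.exp (G u)) (Real.exp (G s) * g s) s :=
        (hGd s hs).exp
      have h2 := main s hs
      have h3 := h1.mul h2
      have hΛs := hΛne s hs
      have e : Real.exp (G s) * g s * Λ s + Real.exp (G s) * (Φt s s + Φx s s) = 0 := by
        rw [hg]
        field_simp
        ring
      rw [e] at h3
      exact h3
    -- F is constant on Ioo 0 τ
    have hFconst : ∀ s ∈ Ioo 0 τ, F s = F t := by
      intro s hs
      have h : ∫ u in s..t, (0:ℝ) = F t - F s := by
        apply intervalIntegral.integral_eq_sub_of_hasDerivAt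
        · intro u hu
          rw [Set.uIcc, Set.mem_Icc] at hu
          exact hFd u ⟨lt_of_lt_of_le (lt_min hs.1 ht.1) hu.1,
            lt_of_le_of_lt hu.2 (max_lt hs.2 ht.2)⟩
        · exact intervalIntegrable_const
      simp only [intervalIntegral.integral_zero] at h
      linarith
    -- G → 0 as t → 0⁺
    have hGlim : Tendsto G (nhdsWithin 0 (Ioi 0)) (nhds 0) := by
      have ht2 : τ / 2 ∈ Ioo 0 τ := ⟨by linarith, by linarith⟩
      have hI : IntegrableOn g (uIcc 0 (τ / 2)) := by
        rw [uIcc_of_le (by linarith : (0:ℝ) ≤ τ / 2), integrableOn_Icc_iff_integrableOn_Ioc]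
        exact hint (τ / 2) ht2
      have hP := intervalIntegral.continuousOn_primitive_interval (μ := volume)
        (f := g) (a := 0) (b := τ / 2) hI
      have hc0 : ContinuousWithinAt (fun u => ∫ z in (0:ℝ)..u, g z) (uIcc 0 (τ / 2)) 0 :=
        hP 0 (by rw [uIcc_of_le (by linarith : (0:ℝ) ≤ τ / 2)]; exact ⟨le_rfl, by linarith⟩)
      have h0 : (∫ z in (0:ℝ)..(0:ℝ), g z) = 0 := intervalIntegral.integral_same
      have h2 : Tendsto G (nhdsWithin 0 (Ioo 0 (τ / 2)))
          (nhds (∫ z in (0:ℝ)..(0:ℝ), g z)) :=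
        hc0.tendsto.mono_left (nhdsWithin_mono _
          (by rw [uIcc_of_le (by linarith : (0:ℝ) ≤ τ / 2)]; exact Ioo_subset_Icc_self))
      rw [h0] at h2
      rwa [nhdsWithin_Ioo_eq_nhdsGT (by linarith : (0:ℝ) < τ / 2)] at h2
    -- F → 1 as t → 0⁺
    have hFlim : Tendsto F (nhdsWithin 0 (Ioi 0)) (nhds 1) := by
      have h1 : Tendsto (fun s => Real.exp (G s)) (nhdsWithin 0 (Ioi 0)) (nhds 1) := by
        have := (Real.continuous_exp.tendsto 0).comp hGlim
        simpa [Function.comp_def] using this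
      have := h1.mul hΛ1
      simpa using this
    -- F is eventually equal to the constant F t near 0⁺
    have hevF : ∀ᶠ s in nhdsWithin 0 (Ioi 0), F s = F t := by
      have hmem : Ioo 0 τ ∈ nhdsWithin 0 (Ioi 0) := by
        rw [← nhdsWithin_Ioo_eq_nhdsGT hτ]
        exact self_mem_nhdsWithin
      filter_upwards [hmem] with s hs
      exact hFconst s hs
    have hFt1 : F t = 1 := by
      have h2 : Tendsto F (nhdsWithin 0 (Ioi 0)) (nhds (F t)) :=
        (tendsto_const_nhds (α := ℝ) (f := nhdsWithin (0:ℝ) (Ioi 0))).congr'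
          (hevF.mono fun s hs => hs.symm)
      exact tendsto_nhds_unique h2 hFlim
    have hexp : Real.exp (G t) * Λ t = 1 := hFt1
    constructor
    · have hexpne : Real.exp (G t) ≠ 0 := Real.exp_ne_zero _
      rw [Real.exp_neg]
      field_simp at hexp ⊢
      linarith [hexp]
    · exact hexp
end

section
/- Let θ > 0 and α ≥ 0. For every complex z with Im(z) > −1/2, setting s := 1/2 − iz, the integral ∫₀^∞ Ψ⁰_{θ,α}(x) e^{izx} dx converges absolutely and equals s^{−θ} exp(α/s), where s^{−θ} = exp(−θ Log s) is the principal power (note Re(s) > 0). -/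
open MeasureTheory Set Filter

lemma aux_real_int {a r : ℝ} (ha : 0 < a) (hr : 0 < r) :
    IntegrableOn (fun x : ℝ => x ^ (a - 1) * Real.exp (-(r * x))) (Ioi 0) := by
  have h := Real.GammaIntegral_convergent ha
  rw [← mul_zero r, ← integrableOn_Ioi_comp_mul_left_iff _ _ hr] at h
  have h2 := (h.const_mul (r ^ (a - 1))⁻¹)
  refine IntegrableOn.congr_fun h2 (fun x hx => ?_) measurableSet_Ioi
  rw [mem_Ioi] at hx
  rw [Real.mul_rpow hr.le hx.le]
  field_simp

lemma aux_meas (c : ℂ) (s : ℂ) :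
    AEStronglyMeasurable (fun x : ℝ => (x : ℂ) ^ c * Complex.exp (-(s * x)))
      (volume.restrict (Ioi 0)) := by
  refine (ContinuousOn.aestronglyMeasurable ?_ measurableSet_Ioi)
  intro x hx
  rw [mem_Ioi] at hx
  apply ContinuousAt.continuousWithinAt
  exact ((continuousAt_cpow_const (Complex.ofReal_mem_slitPlane.2 hx)).comp
    Complex.continuous_ofReal.continuousAt).mul
    ((Complex.continuous_exp.comp (((continuous_const.mul Complex.continuous_ofReal).neg))).continuousAt)

lemma aux_norm {x : ℝ} (hx : 0 < x) (c : ℝ) (s : ℂ) :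
    ‖(x : ℂ) ^ (c : ℂ) * Complex.exp (-(s * x))‖ = x ^ c * Real.exp (-(s.re * x)) := by
  rw [norm_mul, Complex.norm_exp,
    Complex.norm_cpow_eq_rpow_re_of_pos hx]
  simp

lemma aux_cint {a : ℝ} (ha : 0 < a) {s : ℂ} (hs : 0 < s.re) :
    IntegrableOn (fun x : ℝ => (x : ℂ) ^ ((a : ℂ) - 1) * Complex.exp (-(s * x))) (Ioi 0) := by
  refine ((aux_real_int ha hs).mono' (aux_meas _ _) ?_)
  rw [ae_restrict_iff' measurableSet_Ioi]
  filter_upwards with x hx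
  rw [mem_Ioi] at hx
  have : ((a : ℂ) - 1) = ((a - 1 : ℝ) : ℂ) := by push_cast; ring
  rw [this, aux_norm hx]

set_option maxHeartbeats 1000000 in
lemma aux_deriv {a : ℝ} (ha : 0 < a) {w : ℂ} (hw : 0 < w.re) :
    HasDerivAt (fun w : ℂ => ∫ x in Ioi (0:ℝ), (x : ℂ) ^ ((a : ℂ) - 1) * Complex.exp (-(w * x)))
      (∫ x in Ioi (0:ℝ), -(x : ℂ) * ((x : ℂ) ^ ((a : ℂ) - 1) * Complex.exp (-(w * x)))) w := by
  have hε : 0 < w.re / 2 := by linarith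
  refine (hasDerivAt_integral_of_dominated_loc_of_deriv_le (μ := volume.restrict (Ioi (0:ℝ)))
    (𝕜 := ℂ) (x₀ := w)
    (F := fun (w : ℂ) (x : ℝ) => (x : ℂ) ^ ((a : ℂ) - 1) * Complex.exp (-(w * x)))
    (F' := fun (w : ℂ) (x : ℝ) => -(x : ℂ) * ((x : ℂ) ^ ((a : ℂ) - 1) * Complex.exp (-(w * x))))
    (bound := fun x : ℝ => x ^ ((a + 1) - 1) * Real.exp (-(w.re / 2 * x)))
    (s := Metric.ball w (w.re / 2))
    (Metric.ball_mem_nhds w hε) (Eventually.of_forall fun w' => aux_meas _ _) (aux_cint ha hw)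
    ((Complex.continuous_ofReal.neg.aestronglyMeasurable).mul (aux_meas _ _)) ?_
    (aux_real_int (by linarith) hε) ?_).2
  · rw [ae_restrict_iff' measurableSet_Ioi]
    filter_upwards with x hx
    rw [mem_Ioi] at hx
    intro w' hw'
    have hre : w.re / 2 ≤ w'.re := by
      have h1 : |w'.re - w.re| ≤ ‖w' - w‖ := by
        simpa using Complex.abs_re_le_norm (w' - w)
      have h2 : ‖w' - w‖ < w.re / 2 := by
        simpa [Complex.dist_eq] using Metric.mem_ball.mp hw'
      have := abs_le.mp (le_of_lt (lt_of_le_of_lt h1 h2))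
      linarith [this.1]
    rw [norm_mul, norm_neg, Complex.norm_real, Real.norm_of_nonneg hx.le]
    have hn : ‖(x : ℂ) ^ ((a : ℂ) - 1) * Complex.exp (-(w' * x))‖
        = x ^ (a - 1) * Real.exp (-(w'.re * x)) := by
      have : ((a : ℂ) - 1) = ((a - 1 : ℝ) : ℂ) := by push_cast; ring
      rw [this, aux_norm hx]
    rw [hn, ← mul_assoc, mul_comm x (x ^ (a - 1)), ← Real.rpow_add_one hx.ne' (a - 1),
      show a - 1 + 1 = a + 1 - 1 by ring]
    gcongr
  · rw [ae_restrict_iff' measurableSet_Ioi]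
    filter_upwards with x hx
    intro w' _
    have h1 : HasDerivAt (fun w : ℂ => -(w * x)) (-(x : ℂ)) w' := by
      simpa using ((hasDerivAt_id w').mul_const (x : ℂ)).fun_neg
    have h3 := (h1.cexp).const_mul ((x : ℂ) ^ ((a : ℂ) - 1))
    refine h3.congr_deriv ?_
    ring

lemma aux_laplace {a : ℝ} (ha : 0 < a) {s : ℂ} (hs : 0 < s.re) :
    ∫ x in Ioi (0:ℝ), (x : ℂ) ^ ((a : ℂ) - 1) * Complex.exp (-(s * x))
      = (Real.Gamma a : ℂ) * s ^ (-(a : ℂ)) := by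
  set U : Set ℂ := {z : ℂ | 0 < z.re} with hU
  have hUo : IsOpen U := isOpen_lt continuous_const Complex.continuous_re
  have hUp : IsPreconnected U := (convex_halfSpace_re_gt 0).isPreconnected
  set F : ℂ → ℂ := fun w => ∫ x in Ioi (0:ℝ), (x : ℂ) ^ ((a : ℂ) - 1) * Complex.exp (-(w * x))
    with hF
  set G : ℂ → ℂ := fun w => (Real.Gamma a : ℂ) * w ^ (-(a : ℂ)) with hG
  have hFa : AnalyticOnNhd ℂ F U := by
    refine DifferentiableOn.analyticOnNhd (fun w hw => ?_) hUo
    exact (aux_deriv ha hw).differentiableAt.differentiableWithinAt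
  have hGa : AnalyticOnNhd ℂ G U := by
    refine DifferentiableOn.analyticOnNhd (fun w hw => ?_) hUo
    exact ((differentiableAt_const _).mul
      ((differentiableAt_id.cpow (differentiableAt_const _) (Or.inl hw)))).differentiableWithinAt
  have heq : ∀ r : ℝ, 0 < r → F r = G r := by
    intro r hr
    have h1 := Complex.integral_cpow_mul_exp_neg_mul_Ioi
      (a := (a : ℂ)) (by simpa using ha) hr
    have harg : Complex.arg r ≠ Real.pi := by
      rw [Complex.arg_ofReal_of_nonneg hr.le]
      exact Real.pi_ne_zero.symm
    calc F (r:ℂ) = (1 / (r:ℂ)) ^ (a:ℂ) * Complex.Gamma a := h1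
    _ = G (r:ℂ) := by
        show (1 / (r:ℂ)) ^ (a:ℂ) * Complex.Gamma a
          = (Real.Gamma a : ℂ) * (r:ℂ) ^ (-(a:ℂ))
        rw [one_div, Complex.inv_cpow _ _ harg, ← Complex.cpow_neg,
          Complex.Gamma_ofReal, mul_comm]
  have hfreq : ∃ᶠ z in nhdsWithin (1 : ℂ) {(1:ℂ)}ᶜ, F z = G z := by
    have htend : Tendsto (fun n : ℕ => ((1 + ((n:ℝ)+1)⁻¹ : ℝ) : ℂ)) atTop
        (nhdsWithin (1 : ℂ) {(1:ℂ)}ᶜ) := by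
      rw [tendsto_nhdsWithin_iff]
      constructor
      · have h0 : Tendsto (fun n : ℕ => (1 + ((n:ℝ)+1)⁻¹ : ℝ)) atTop (nhds 1) := by
          have h := tendsto_one_div_add_atTop_nhds_zero_nat (𝕜 := ℝ)
          simp only [one_div] at h
          have := (tendsto_const_nhds (x := (1:ℝ)) (f := atTop (α := ℕ))).add h
          simpa using this
        have h2 := (Complex.continuous_ofReal.tendsto 1).comp h0
        simp only [Function.comp_def, Complex.ofReal_one] at h2
        exact h2
      · filter_upwards with n
        simp only [mem_compl_iff, mem_singleton_iff]
        intro h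
        have : (1 + ((n:ℝ)+1)⁻¹ : ℝ) = 1 := by exact_mod_cast h
        have hn : (0:ℝ) < ((n:ℝ)+1)⁻¹ := by positivity
        linarith
    exact htend.frequently (Eventually.frequently (Eventually.of_forall fun n =>
      heq _ (by positivity)))
  exact hFa.eqOn_of_preconnected_of_frequently_eq hGa hUp (by simp [hU] : (1:ℂ) ∈ U) hfreq hs

lemma aux_gamma_lb {θ : ℝ} (hθ : 0 < θ) (m : ℕ) :
    min (Real.Gamma θ) (Real.Gamma (θ + 1)) ≤ Real.Gamma (θ + m) := by
  induction m with
  | zero => simpa using min_le_left _ _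
  | succ n ih =>
    match n, ih with
    | 0, _ => simpa using min_le_right _ _
    | (k+1), ih =>
      have h1 : θ + ((k:ℝ) + 1) ≠ 0 := by positivity
      have h2 : Real.Gamma (θ + ((k:ℝ)+1+1)) = (θ + ((k:ℝ)+1)) * Real.Gamma (θ + ((k:ℝ)+1)) := by
        rw [show θ + ((k:ℝ)+1+1) = (θ + ((k:ℝ)+1)) + 1 by ring, Real.Gamma_add_one h1]
      push_cast
      rw [h2]
      have h3 : (1:ℝ) ≤ θ + ((k:ℝ)+1) := by
        have : (0:ℝ) ≤ (k:ℝ) := Nat.cast_nonneg k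
        linarith
      have h4 : Real.Gamma (θ + ((k:ℝ)+1)) ≤ (θ + ((k:ℝ)+1)) * Real.Gamma (θ + ((k:ℝ)+1)) := by
        nlinarith [Real.Gamma_pos_of_pos (show 0 < θ + ((k:ℝ)+1) by positivity)]
      push_cast at ih
      linarith

/-- `Ψ⁰_{θ,α}(x) = e^{-x/2} Σ_{m≥0} αᵐ x^{m+θ-1}/(m! Γ(θ+m))` for `x > 0`, and `0` for `x ≤ 0`
(equivalently `e^{-x/2} (x/α)^{(θ-1)/2} I_{θ-1}(2√(αx))`). -/
noncomputable def Psi0 (θ α x : ℝ) : ℝ :=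
  if 0 < x then
    Real.exp (-x / 2) *
      ∑' m : ℕ, α ^ m * x ^ ((m : ℝ) + θ - 1) / (m.factorial * Real.Gamma (θ + m))
  else 0

/-- the Fourier–Laplace transform identity
`∫₀^∞ Ψ⁰_{θ,α}(x) e^{izx} dx = s^{-θ} exp(α/s)`, `s = 1/2 - iz`, `Im z > -1/2`. -/
theorem statement6 (θ α : ℝ) (hθ : 0 < θ) (hα : 0 ≤ α) :
    ∀ z : ℂ, -1/2 < z.im → ∀ s : ℂ, s = 1/2 - Complex.I * z →
      IntegrableOn (fun x : ℝ => (Psi0 θ α x : ℂ) * Complex.exp (Complex.I * z * x)) (Ioi 0) ∧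
      ∫ x in Ioi (0:ℝ), (Psi0 θ α x : ℂ) * Complex.exp (Complex.I * z * x)
        = s ^ (-(θ : ℂ)) * Complex.exp ((α : ℂ) / s) := by
  intro z hz s hs
  have hr : 0 < s.re := by
    rw [hs]
    simp only [Complex.sub_re, Complex.mul_re, Complex.I_re, Complex.I_im]
    norm_num
    linarith
  have hsne : s ≠ 0 := by
    intro h; rw [h] at hr; simp at hr
  set r : ℝ := s.re with hrdef
  -- the summands
  set c : ℕ → ℝ := fun m => α ^ m / (m.factorial * Real.Gamma (θ + m)) with hc
  set f : ℕ → ℝ → ℂ := fun m x =>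
    (c m : ℂ) * ((x : ℂ) ^ (((θ + m : ℝ) : ℂ) - 1) * Complex.exp (-(s * x))) with hf
  have ham : ∀ m : ℕ, (0:ℝ) < θ + m := fun m => by positivity
  have hcnn : ∀ m : ℕ, 0 ≤ c m := fun m => by
    have := (Real.Gamma_pos_of_pos (ham m)).le
    rw [hc]
    positivity
  -- integrability of each term
  have hfi : ∀ m : ℕ, Integrable (f m) (volume.restrict (Ioi 0)) := fun m =>
    ((aux_cint (ham m) hr).const_mul _)
  -- norm of each term
  have hfnorm : ∀ m : ℕ, ∀ x : ℝ, 0 < x →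
      ‖f m x‖ = c m * (x ^ (θ + (m:ℝ) - 1) * Real.exp (-(r * x))) := by
    intro m x hx
    show ‖(c m : ℂ) * ((x : ℂ) ^ (((θ + m : ℝ) : ℂ) - 1) * Complex.exp (-(s * x)))‖ = _
    rw [show (((θ + m : ℝ)) : ℂ) - 1 = ((θ + (m:ℝ) - 1 : ℝ) : ℂ) by push_cast; ring]
    rw [norm_mul, Complex.norm_real, Real.norm_of_nonneg (hcnn m), aux_norm hx]
  -- value of the norm integrals
  have hnormint : ∀ m : ℕ,
      (∫ x in Ioi (0:ℝ), ‖f m x‖) = (1/r) ^ θ * ((α/r) ^ m / m.factorial) := by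
    intro m
    have h1 : (∫ x in Ioi (0:ℝ), ‖f m x‖)
        = c m * ∫ x in Ioi (0:ℝ), x ^ ((θ + (m:ℝ)) - 1) * Real.exp (-(r * x)) := by
      rw [← integral_const_mul]
      refine setIntegral_congr_fun measurableSet_Ioi (fun x hx => ?_)
      rw [hfnorm m x hx]
    rw [h1, Real.integral_rpow_mul_exp_neg_mul_Ioi (ham m) hr]
    have hg : Real.Gamma (θ + m) ≠ 0 := (Real.Gamma_pos_of_pos (ham m)).ne'
    have h2 : (1/r) ^ (θ + (m:ℝ)) = (1/r) ^ θ * (1/r) ^ (m:ℕ) := by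
      rw [Real.rpow_add (by positivity), Real.rpow_natCast]
    rw [hc, h2]
    have hfm : (m.factorial : ℝ) ≠ 0 := Nat.cast_ne_zero.mpr m.factorial_ne_zero
    field_simp
    ring
  -- summability of norm integrals
  have hsumint : Summable (fun m => ∫ x in Ioi (0:ℝ), ‖f m x‖) := by
    have := (Real.summable_pow_div_factorial (α/r)).mul_left ((1/r) ^ θ)
    exact this.congr (fun m => (hnormint m).symm)
  -- pointwise summability
  have hptnorm : ∀ x : ℝ, 0 < x → Summable (fun m => ‖f m x‖) := by
    intro x hx
    set Cmin : ℝ := min (Real.Gamma θ) (Real.Gamma (θ + 1)) with hCmin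
    have hC : 0 < Cmin := lt_min (Real.Gamma_pos_of_pos hθ)
      (Real.Gamma_pos_of_pos (by linarith))
    refine Summable.of_nonneg_of_le (fun m => norm_nonneg _) (fun m => ?_)
      (((Real.summable_pow_div_factorial (α * x)).mul_left
        (x ^ (θ - 1) * Real.exp (-(r * x)) / Cmin)))
    rw [hfnorm m x hx]
    have hxpow : x ^ (θ + (m:ℝ) - 1) = x ^ (θ - 1) * x ^ (m:ℕ) := by
      rw [show θ + (m:ℝ) - 1 = (θ - 1) + (m:ℝ) by ring, Real.rpow_add hx, Real.rpow_natCast]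
    rw [hxpow]
    have hgb : Cmin ≤ Real.Gamma (θ + m) := aux_gamma_lb hθ m
    have hg : 0 < Real.Gamma (θ + m) := Real.Gamma_pos_of_pos (ham m)
    have hfm : (0:ℝ) < (m.factorial : ℝ) := by positivity
    have hexp : 0 ≤ Real.exp (-(r * x)) := Real.exp_nonneg _
    have hx1 : 0 ≤ x ^ (θ - 1) := Real.rpow_nonneg hx.le _
    show c m * (x ^ (θ - 1) * x ^ (m:ℕ) * Real.exp (-(r * x)))
        ≤ x ^ (θ - 1) * Real.exp (-(r * x)) / Cmin * ((α * x) ^ m / m.factorial)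
    rw [hc, div_mul_eq_mul_div]
    have hrw : x ^ (θ - 1) * Real.exp (-(r * x)) / Cmin * ((α * x) ^ m / ↑m.factorial)
        = α ^ m * (x ^ (θ - 1) * x ^ (m:ℕ) * Real.exp (-(r * x))) / ((m.factorial : ℝ) * Cmin) := by
      rw [mul_pow]
      field_simp
    calc α ^ m * (x ^ (θ - 1) * x ^ (m:ℕ) * Real.exp (-(r * x))) / ((m.factorial : ℝ) * Real.Gamma (θ + m))
        ≤ α ^ m * (x ^ (θ - 1) * x ^ (m:ℕ) * Real.exp (-(r * x))) / ((m.factorial : ℝ) * Cmin) := by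
          gcongr
      _ = _ := hrw.symm
  have hptsum : ∀ x : ℝ, 0 < x → Summable (fun m => f m x) :=
    fun x hx => (hptnorm x hx).of_norm
  -- a.e. equality of the integrand with the tsum
  have hae : ∀ x ∈ Ioi (0:ℝ),
      (Psi0 θ α x : ℂ) * Complex.exp (Complex.I * z * x) = ∑' m, f m x := by
    intro x hx
    rw [mem_Ioi] at hx
    rw [Psi0, if_pos hx]
    have hexp : ((Real.exp (-x / 2) : ℝ) : ℂ) * Complex.exp (Complex.I * z * x)
        = Complex.exp (-(s * x)) := by
      rw [Complex.ofReal_exp, ← Complex.exp_add]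
      congr 1
      rw [hs]
      push_cast
      ring
    rw [Complex.ofReal_mul, Complex.ofReal_tsum, mul_comm ((Real.exp (-x/2) : ℝ) : ℂ),
      mul_assoc, hexp, ← tsum_mul_right]
    refine tsum_congr (fun m => ?_)
    rw [hf, hc]
    push_cast [Complex.ofReal_cpow hx.le]
    rw [show ((m:ℂ) + (θ:ℂ) - 1) = ((θ:ℂ) + (m:ℂ) - 1) by ring]
    ring
  -- the tsum function
  set g : ℝ → ℂ := fun x => ∑' m, f m x with hg
  have hgmeas : AEStronglyMeasurable g (volume.restrict (Ioi 0)) := by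
    refine aestronglyMeasurable_of_tendsto_ae (u := atTop)
      (f := fun n x => ∑ m ∈ Finset.range n, f m x) (fun n => ?_) ?_
    · exact Finset.aestronglyMeasurable_fun_sum _ (fun m _ => (hfi m).1)
    · rw [ae_restrict_iff' measurableSet_Ioi]
      filter_upwards with x hx
      exact ((hptsum x hx).hasSum.tendsto_sum_nat)
  have hlint : ∑' m, ∫⁻ x in Ioi (0:ℝ), ‖f m x‖₊ ≠ ⊤ := by
    have heach : ∀ m : ℕ, (∫⁻ x in Ioi (0:ℝ), ‖f m x‖₊)
        = ENNReal.ofReal (∫ x in Ioi (0:ℝ), ‖f m x‖) := fun m =>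
      (ofReal_integral_norm_eq_lintegral_enorm (hfi m)).symm
    calc ∑' m, ∫⁻ x in Ioi (0:ℝ), ‖f m x‖₊
        = ∑' m, ENNReal.ofReal (∫ x in Ioi (0:ℝ), ‖f m x‖) := tsum_congr heach
      _ = ENNReal.ofReal (∑' m, ∫ x in Ioi (0:ℝ), ‖f m x‖) :=
          (ENNReal.ofReal_tsum_of_nonneg
            (fun m => integral_nonneg (fun x => norm_nonneg _)) hsumint).symm
      _ ≠ ⊤ := ENNReal.ofReal_ne_top
  have hint_g : Integrable g (volume.restrict (Ioi 0)) := by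
    refine ⟨hgmeas, ?_⟩
    rw [hasFiniteIntegral_def]
    calc ∫⁻ x in Ioi (0:ℝ), ‖g x‖₊
        ≤ ∫⁻ x in Ioi (0:ℝ), ∑' m, (‖f m x‖₊ : ENNReal) := by
          refine lintegral_mono_ae ?_
          rw [ae_restrict_iff' measurableSet_Ioi]
          filter_upwards with x hx
          have hsn : Summable (fun m => ‖f m x‖₊) := by
            rw [← NNReal.summable_coe]
            simpa [coe_nnnorm] using hptnorm x hx
          have h1 : ‖g x‖₊ ≤ ∑' m, ‖f m x‖₊ := nnnorm_tsum_le hsn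
          calc (‖g x‖₊ : ENNReal) ≤ ((∑' m, ‖f m x‖₊ : NNReal) : ENNReal) :=
                ENNReal.coe_le_coe.mpr h1
            _ = ∑' m, (‖f m x‖₊ : ENNReal) := ENNReal.coe_tsum hsn
      _ = ∑' m, ∫⁻ x in Ioi (0:ℝ), ‖f m x‖₊ := lintegral_tsum (fun m => (hfi m).1.enorm)
      _ < ⊤ := hlint.lt_top
  have haeq : (fun x : ℝ => (Psi0 θ α x : ℂ) * Complex.exp (Complex.I * z * x))
      =ᵐ[volume.restrict (Ioi 0)] g := by
    rw [Filter.EventuallyEq, ae_restrict_iff' measurableSet_Ioi]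
    filter_upwards with x hx
    exact hae x hx
  refine ⟨hint_g.congr haeq.symm, ?_⟩
  rw [integral_congr_ae haeq]
  have hg2 : ∫ x in Ioi (0:ℝ), g x = ∑' m, ∫ x in Ioi (0:ℝ), f m x :=
    integral_tsum (fun m => (hfi m).1) hlint
  rw [hg2]
  have hintval : ∀ m : ℕ, (∫ x in Ioi (0:ℝ), f m x)
      = s ^ (-(θ:ℂ)) * (((α:ℂ)/s) ^ m / m.factorial) := by
    intro m
    have h0 : (∫ x in Ioi (0:ℝ), f m x) = (c m : ℂ) *
        ∫ x in Ioi (0:ℝ), (x:ℂ) ^ (((θ + m : ℝ):ℂ) - 1) * Complex.exp (-(s * x)) := by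
      rw [← integral_const_mul]
    rw [h0, aux_laplace (ham m) hr]
    have hΓ : (Real.Gamma (θ + m) : ℂ) ≠ 0 :=
      Complex.ofReal_ne_zero.mpr (Real.Gamma_pos_of_pos (ham m)).ne'
    have hsm : s ^ (-((θ + (m:ℝ) : ℝ) : ℂ)) = s ^ (-(θ:ℂ)) * (s ^ m)⁻¹ := by
      rw [show -(((θ + (m:ℝ) : ℝ)):ℂ) = (-(θ:ℂ)) + (-(m:ℂ)) by push_cast; ring,
        Complex.cpow_add _ _ hsne, Complex.cpow_neg, Complex.cpow_neg, Complex.cpow_natCast]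
    rw [hsm, hc]
    have hsp : (s : ℂ) ^ (m:ℕ) ≠ 0 := pow_ne_zero _ hsne
    have hfm : ((m.factorial : ℕ) : ℂ) ≠ 0 := Nat.cast_ne_zero.mpr m.factorial_ne_zero
    push_cast
    rw [div_pow]
    field_simp
  calc ∑' m, ∫ x in Ioi (0:ℝ), f m x
      = ∑' m : ℕ, s ^ (-(θ:ℂ)) * (((α:ℂ)/s) ^ m / m.factorial) := tsum_congr hintval
    _ = s ^ (-(θ:ℂ)) * ∑' m : ℕ, (((α:ℂ)/s) ^ m / m.factorial) := tsum_mul_left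
    _ = s ^ (-(θ:ℂ)) * Complex.exp ((α:ℂ)/s) := by
        rw [Complex.exp_eq_exp_ℂ, NormedSpace.exp_eq_tsum_div]
end

section
/- Let θ > 0, α ≥ 0, and let n ≥ 1 be an integer. Then for every x ≥ 0, ∫₀ˣ Ψ⁰_{θ,α}(y) · e^{−(x−y)/2} (x−y)^{n−1}/(n−1)! dy = Ψ⁰_{θ+n,α}(x). -/
open MeasureTheory Set Filter

lemma real_beta_scaled {a b x : ℝ} (ha : 0 < a) (hb : 0 < b) (hx : 0 < x) :
    ∫ y in (0:ℝ)..x, y ^ (a - 1) * (x - y) ^ (b - 1)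
      = x ^ (a + b - 1) * (Real.Gamma a * Real.Gamma b / Real.Gamma (a + b)) := by
  have hscaled := Complex.betaIntegral_scaled (a : ℂ) (b : ℂ) hx
  have hne : Complex.Gamma ((a:ℂ) + b) ≠ 0 := by
    rw [← Complex.ofReal_add, Complex.Gamma_ofReal]
    exact_mod_cast (Real.Gamma_pos_of_pos (by linarith : (0:ℝ) < a + b)).ne'
  have h := Complex.Gamma_mul_Gamma_eq_betaIntegral
    (s := (a:ℂ)) (t := (b:ℂ)) (by simpa using ha) (by simpa using hb)
  have hbeta : Complex.betaIntegral a b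
      = Complex.Gamma a * Complex.Gamma b / Complex.Gamma ((a:ℂ) + b) := by
    rw [eq_div_iff hne, mul_comm]
    exact h.symm
  have key : ((∫ y in (0:ℝ)..x, y ^ (a-1) * (x-y) ^ (b-1) : ℝ) : ℂ)
      = ∫ y in (0:ℝ)..x, (y:ℂ) ^ ((a:ℂ)-1) * ((x:ℂ)-y) ^ ((b:ℂ)-1) := by
    rw [← intervalIntegral.integral_ofReal]
    refine intervalIntegral.integral_congr fun y hy => ?_
    rw [uIcc_of_le hx.le] at hy
    rw [Complex.ofReal_mul, Complex.ofReal_cpow hy.1 (a-1),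
      Complex.ofReal_cpow (by linarith [hy.2] : (0:ℝ) ≤ x - y) (b-1)]
    push_cast
    ring
  apply Complex.ofReal_injective
  rw [key, hscaled, hbeta]
  rw [← Complex.ofReal_add, Complex.Gamma_ofReal, Complex.Gamma_ofReal, Complex.Gamma_ofReal,
    show ((a+b:ℝ):ℂ)-1 = ((a+b-1:ℝ):ℂ) by push_cast; ring, ← Complex.ofReal_cpow hx.le]
  push_cast
  ring

lemma gamma_fact_le {s : ℝ} (hs : 1 ≤ s) (m : ℕ) :
    (m.factorial : ℝ) * Real.Gamma s ≤ Real.Gamma (s + m) := by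
  induction m with
  | zero => simp
  | succ k ih =>
    have hk : (0:ℝ) ≤ (k:ℝ) := Nat.cast_nonneg k
    have hpos : (0:ℝ) < s + k := by linarith
    have hG : Real.Gamma (s + (k+1:ℕ)) = (s + k) * Real.Gamma (s + k) := by
      rw [show s + ((k+1:ℕ):ℝ) = (s + k) + 1 by push_cast; ring, Real.Gamma_add_one hpos.ne']
    rw [hG]
    have hGs : 0 < Real.Gamma s := Real.Gamma_pos_of_pos (by linarith)
    have h1 : (0:ℝ) ≤ (k.factorial:ℝ) * Real.Gamma s :=
      mul_nonneg (Nat.cast_nonneg _) hGs.le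
    calc ((k+1).factorial : ℝ) * Real.Gamma s
        = ((k:ℝ)+1) * ((k.factorial:ℝ) * Real.Gamma s) := by
          push_cast [Nat.factorial_succ]; ring
      _ ≤ (s + k) * ((k.factorial:ℝ) * Real.Gamma s) := by
          apply mul_le_mul_of_nonneg_right (by linarith) h1
      _ ≤ (s + k) * Real.Gamma (s + k) := by
          apply mul_le_mul_of_nonneg_left ih (by linarith)

/-- the convolution identity
`∫₀ˣ Ψ⁰_{θ,α}(y) e^{-(x-y)/2} (x-y)^{n-1}/(n-1)! dy = Ψ⁰_{θ+n,α}(x)`. -/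
theorem statement17 (θ α : ℝ) (hθ : 0 < θ) (hα : 0 ≤ α) (n : ℕ) (hn : 1 ≤ n) :
    ∀ x ≥ (0:ℝ),
      (∫ y in (0:ℝ)..x,
          Psi0 θ α y * (Real.exp (-(x - y) / 2) * (x - y) ^ (n - 1) / (n - 1).factorial))
        = Psi0 (θ + n) α x := by
  intro x hx
  rcases eq_or_lt_of_le hx with h0 | hxpos
  · rw [← h0]
    simp [Psi0]
  have hn1 : (1:ℝ) ≤ (n:ℝ) := by exact_mod_cast hn
  have hΓn : Real.Gamma n = (n-1).factorial := by
    rw [show (n:ℝ) = ((n-1:ℕ):ℝ) + 1 by rw [Nat.cast_sub hn]; push_cast; ring,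
      Real.Gamma_nat_eq_factorial]
  set C : ℝ := Real.exp (-x/2) / (n-1).factorial with hC
  set F : ℕ → ℝ → ℝ := fun m y =>
    C * (α ^ m * y ^ ((m : ℝ) + θ - 1) / (m.factorial * Real.Gamma (θ + m)) * (x - y) ^ (n-1))
    with hF
  have hCpos : 0 < C := by
    apply div_pos (Real.exp_pos _)
    exact_mod_cast (n-1).factorial_pos
  have hF_int : ∀ m : ℕ, Integrable (F m) (volume.restrict (Ioc 0 x)) := by
    intro m
    have hm : (0:ℝ) < (m:ℝ) + θ := by
      have : (0:ℝ) ≤ (m:ℝ) := Nat.cast_nonneg m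
      linarith
    have hbase : IntegrableOn (fun y => y ^ ((m:ℝ)+θ-1)) (Ioc 0 x) := by
      have := intervalIntegral.intervalIntegrable_rpow' (a := 0) (b := x)
        (r := (m:ℝ)+θ-1) (by linarith)
      rwa [intervalIntegrable_iff_integrableOn_Ioc_of_le hxpos.le] at this
    have hb : Integrable (fun y => (x-y)^(n-1) * y^((m:ℝ)+θ-1))
        (volume.restrict (Ioc 0 x)) := by
      refine Integrable.bdd_mul (c := x^(n-1)) hbase
        ((continuous_const.sub continuous_id).pow _).aestronglyMeasurable ?_
      filter_upwards [ae_restrict_mem measurableSet_Ioc] with y hy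
      have habs : |x - y| ≤ x := abs_le.mpr ⟨by linarith [hy.1, hy.2], by linarith [hy.1]⟩
      calc ‖(x-y)^(n-1)‖ = |x-y|^(n-1) := by rw [norm_pow]; rfl
        _ ≤ x^(n-1) := pow_le_pow_left₀ (abs_nonneg _) habs _
    have heq : F m = fun y =>
        (C * (α ^ m / (m.factorial * Real.Gamma (θ + m)))) *
          ((x-y)^(n-1) * y^((m:ℝ)+θ-1)) := by
      funext y; simp only [hF]; ring
    rw [heq]
    exact hb.const_mul _
  have hInt : ∀ m : ℕ, ∫ y in Ioc 0 x, F m y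
      = Real.exp (-x/2) *
        (α ^ m * x ^ ((m : ℝ) + (θ + n) - 1) / (m.factorial * Real.Gamma (θ + n + m))) := by
    intro m
    have hm : (0:ℝ) < (m:ℝ) + θ := by
      have : (0:ℝ) ≤ (m:ℝ) := Nat.cast_nonneg m
      linarith
    have hΓm : (0:ℝ) < Real.Gamma (θ + m) := Real.Gamma_pos_of_pos (by linarith)
    have hΓbig : (0:ℝ) < Real.Gamma (θ + n + m) := Real.Gamma_pos_of_pos (by linarith)
    rw [← intervalIntegral.integral_of_le hxpos.le]
    have congr1 : ∫ y in (0:ℝ)..x, F m y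
        = (C * (α ^ m / (m.factorial * Real.Gamma (θ + m)))) *
            ∫ y in (0:ℝ)..x, y ^ ((m:ℝ)+θ-1) * (x-y) ^ ((n:ℝ)-1) := by
      rw [← intervalIntegral.integral_const_mul]
      refine intervalIntegral.integral_congr fun y hy => ?_
      rw [uIcc_of_le hxpos.le] at hy
      simp only [hF]
      rw [show ((n:ℝ)-1) = ((n-1:ℕ):ℝ) by rw [Nat.cast_sub hn]; push_cast; ring,
        Real.rpow_natCast]
      ring
    rw [congr1, real_beta_scaled (a := (m:ℝ)+θ) hm (by linarith) hxpos]
    rw [show (m:ℝ)+θ+(n:ℝ)-1 = (m:ℝ)+(θ+(n:ℝ))-1 by ring,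
      show (m:ℝ)+θ+(n:ℝ) = θ+(n:ℝ)+(m:ℝ) by ring,
      show Real.Gamma ((m:ℝ)+θ) = Real.Gamma (θ+(m:ℝ)) by ring_nf,
      hΓn, hC]
    have hfm : ((m.factorial:ℝ)) ≠ 0 := by exact_mod_cast m.factorial_ne_zero
    have hfn : (((n-1).factorial:ℝ)) ≠ 0 := by exact_mod_cast (n-1).factorial_ne_zero
    field_simp
  have hF_nonneg : ∀ m : ℕ, ∀ y ∈ Ioc (0:ℝ) x, 0 ≤ F m y := by
    intro m y hy
    have hm : (0:ℝ) < (m:ℝ) + θ := by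
      have : (0:ℝ) ≤ (m:ℝ) := Nat.cast_nonneg m
      linarith
    have hΓm : (0:ℝ) < Real.Gamma (θ + m) := Real.Gamma_pos_of_pos (by linarith)
    have h1 : (0:ℝ) ≤ x - y := by linarith [hy.2]
    have h2 : (0:ℝ) ≤ y := hy.1.le
    simp only [hF]
    apply mul_nonneg hCpos.le
    apply mul_nonneg
    · apply div_nonneg (mul_nonneg (pow_nonneg hα m) (Real.rpow_nonneg h2 _))
      exact mul_nonneg (Nat.cast_nonneg _) hΓm.le
    · exact pow_nonneg h1 _
  have hnorm : ∀ m : ℕ, ∫ y in Ioc 0 x, ‖F m y‖ = ∫ y in Ioc 0 x, F m y := by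
    intro m
    refine setIntegral_congr_fun measurableSet_Ioc fun y hy => ?_
    rw [Real.norm_eq_abs, abs_of_nonneg (hF_nonneg m y hy)]
  have hθn1 : (1:ℝ) ≤ θ + n := by linarith
  have hΓθn : (0:ℝ) < Real.Gamma (θ + n) := Real.Gamma_pos_of_pos (by linarith)
  have hv : Summable (fun m : ℕ =>
      α ^ m * x ^ ((m : ℝ) + (θ + n) - 1) / (m.factorial * Real.Gamma (θ + n + m))) := by
    refine Summable.of_nonneg_of_le (fun m => ?_) (fun m => ?_)
      (((Real.summable_pow_div_factorial (α*x)).mul_left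
        (x ^ (θ+(n:ℝ)-1) / Real.Gamma (θ+n))))
    · 
      have hΓbig : (0:ℝ) < Real.Gamma (θ + n + m) := by
        apply Real.Gamma_pos_of_pos
        have : (0:ℝ) ≤ (m:ℝ) := Nat.cast_nonneg m
        linarith
      apply div_nonneg (mul_nonneg (pow_nonneg hα m) (Real.rpow_nonneg hxpos.le _))
      exact mul_nonneg (Nat.cast_nonneg _) hΓbig.le
    · have hΓbig : (0:ℝ) < Real.Gamma (θ + n + m) := by
        apply Real.Gamma_pos_of_pos
        have : (0:ℝ) ≤ (m:ℝ) := Nat.cast_nonneg m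
        linarith
      have hfac := gamma_fact_le hθn1 m
      have hfm1 : (1:ℝ) ≤ (m.factorial:ℝ) := by exact_mod_cast m.factorial_pos
      have hDle : (m.factorial:ℝ) * Real.Gamma (θ+n) ≤ Real.Gamma (θ+n+m) := hfac
      have hNum : α ^ m * x ^ ((m : ℝ) + (θ + n) - 1)
          = x ^ (θ+(n:ℝ)-1) * (α*x)^m := by
        rw [show (m:ℝ) + (θ+(n:ℝ)) - 1 = (θ+(n:ℝ)-1) + (m:ℝ) by ring,
          Real.rpow_add hxpos, Real.rpow_natCast, mul_pow]
        ring
      have hNnn : (0:ℝ) ≤ x ^ (θ+(n:ℝ)-1) * (α*x)^m :=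
        mul_nonneg (Real.rpow_nonneg hxpos.le _) (pow_nonneg (mul_nonneg hα hxpos.le) m)
      have hfm0 : (0:ℝ) < (m.factorial:ℝ) := by exact_mod_cast m.factorial_pos
      have h2 : Real.Gamma (θ+n) ≤ Real.Gamma (θ+n+m) :=
        le_trans (le_mul_of_one_le_left hΓθn.le hfm1) hDle
      rw [hNum, div_mul_div_comm, div_le_div_iff₀ (mul_pos hfm0 hΓbig) (mul_pos hΓθn hfm0)]
      apply mul_le_mul_of_nonneg_left ?_ hNnn
      calc Real.Gamma (θ+n) * (m.factorial:ℝ) = (m.factorial:ℝ) * Real.Gamma (θ+n) := mul_comm _ _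
        _ ≤ (m.factorial:ℝ) * Real.Gamma (θ+n+m) :=
            mul_le_mul_of_nonneg_left h2 hfm0.le
  have hF_sum : Summable (fun m : ℕ => ∫ y in Ioc 0 x, ‖F m y‖) := by
    refine (hv.mul_left (Real.exp (-x/2))).congr fun m => ?_
    rw [hnorm m, hInt m]
  have swap := MeasureTheory.integral_tsum_of_summable_integral_norm hF_int hF_sum
  have hexpand : EqOn
      (fun y => Psi0 θ α y * (Real.exp (-(x - y) / 2) * (x - y) ^ (n - 1) / (n - 1).factorial))
      (fun y => ∑' m : ℕ, F m y) (Ioc 0 x) := by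
    intro y hy
    have hsum : ∑' m : ℕ, F m y
        = C * ((∑' m : ℕ, α ^ m * y ^ ((m : ℝ) + θ - 1) /
            (m.factorial * Real.Gamma (θ + m))) * (x - y) ^ (n-1)) := by
      simp only [hF]
      rw [tsum_mul_left, tsum_mul_right]
    have hexp : Real.exp (-y/2) * Real.exp (-(x-y)/2) = Real.exp (-x/2) := by
      rw [← Real.exp_add]; congr 1; ring
    simp only
    rw [hsum, Psi0, if_pos hy.1, hC, ← hexp]
    ring
  rw [intervalIntegral.integral_of_le hxpos.le,
    setIntegral_congr_fun measurableSet_Ioc hexpand, ← swap, tsum_congr hInt, tsum_mul_left,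
    Psi0, if_pos hxpos]
end
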